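/- Let 0 < t ≤ dim_H Λ_A. If F_i ∈ 𝒢^t(Σ_A) for all i ∈ ℕ, then M_∞^t((⋂_{i=1}^∞ F_i) ∩ U) = M_∞^t(U) for every open set U ⊆ Σ_A; in particular ⋂_{i=1}^∞ F_i ∈ 𝒢^t(Σ_A). -/

import Mathlib

open Set Filter Topology
open scoped ENNReal NNReal

noncomputable section

/-- Euclidean space `ℝ^N`. -/
abbrev Euc (N : ℕ) := EuclideanSpace ℝ (Fin N)

/-- The data and standing assumptions of a conformal graph directed Markov system:
a transitive subshift of finite type over the alphabet `Fin q`, a compact set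
`X ⊆ ℝ^N` that is the closure of its interior, conformal contractions
`f0 i = f_i` and `f i j = f_{i,j}` mapping `X` into `X`, with disjoint images of the
interior of `X`, derivative norms strictly between `λ₁` and `λ₂`, and the
bounded distortion assumption with exponent `α`. -/
structure PreGDMS (q N : ℕ) where
  hq : 0 < q
  /-- transition matrix of zeros and ones -/
  A : Fin q → Fin q → Bool
  /-- the subshift is transitive -/
  trans : ∀ a b : Fin q, ∃ n : ℕ, 0 < n ∧ ∃ w : ℕ → Fin q,
    w 0 = a ∧ w n = b ∧ ∀ k < n, A (w k) (w (k+1)) = true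
  X : Set (Euc N)
  Xcompact : IsCompact X
  Xnonempty : X.Nonempty
  Xregular : X = closure (interior X)
  f0 : Fin q → Euc N → Euc N
  f : Fin q → Fin q → Euc N → Euc N
  f0maps : ∀ i, Set.MapsTo (f0 i) X X
  fmaps : ∀ i j, A i j = true → Set.MapsTo (f i j) X X
  conformal0 : ∀ i, ∀ x ∈ X, DifferentiableAt ℝ (f0 i) x ∧ IsConformalMap (fderiv ℝ (f0 i) x)
  conformal1 : ∀ i j, A i j = true → ∀ x ∈ X,
    DifferentiableAt ℝ (f i j) x ∧ IsConformalMap (fderiv ℝ (f i j) x)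
  lam1 : ℝ
  lam2 : ℝ
  lam1pos : 0 < lam1
  lam1lt : lam1 < lam2
  lam2lt : lam2 < 1
  derivBound0 : ∀ i, ∀ x ∈ X, lam1 < ‖fderiv ℝ (f0 i) x‖ ∧ ‖fderiv ℝ (f0 i) x‖ < lam2
  derivBound1 : ∀ i j, A i j = true → ∀ x ∈ X,
    lam1 < ‖fderiv ℝ (f i j) x‖ ∧ ‖fderiv ℝ (f i j) x‖ < lam2
  disjoint00 : ∀ i i', i ≠ i' → Disjoint (f0 i '' interior X) (f0 i' '' interior X)
  disjoint01 : ∀ i i' j', A i' j' = true →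
    Disjoint (f0 i '' interior X) (f i' j' '' interior X)
  disjoint11 : ∀ i j i' j', A i j = true → A i' j' = true → (i, j) ≠ (i', j') →
    Disjoint (f i j '' interior X) (f i' j' '' interior X)
  alpha : ℝ
  alphapos : 0 < alpha
  distortion0 : ∀ i, ∀ x ∈ X, ∀ y ∈ X,
    |‖fderiv ℝ (f0 i) x‖ - ‖fderiv ℝ (f0 i) y‖| ≤
      (sSup ((fun z => ‖(fderiv ℝ (f0 i) z).inverse‖) '' X))⁻¹ * ‖x - y‖ ^ alpha
  distortion1 : ∀ i j, A i j = true → ∀ x ∈ X, ∀ y ∈ X,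
    |‖fderiv ℝ (f i j) x‖ - ‖fderiv ℝ (f i j) y‖| ≤
      (sSup ((fun z => ‖(fderiv ℝ (f i j) z).inverse‖) '' X))⁻¹ * ‖x - y‖ ^ alpha

namespace PreGDMS

variable {q N : ℕ}

/-- The subshift of finite type `Σ_A`, with the product (subspace) topology. -/
def SigmaA (S : PreGDMS q N) : Type := {x : ℕ → Fin q // ∀ n, S.A (x n) (x (n+1)) = true}

instance (S : PreGDMS q N) : TopologicalSpace S.SigmaA :=
  inferInstanceAs (TopologicalSpace {x : ℕ → Fin q // ∀ n, S.A (x n) (x (n+1)) = true})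

/-- The shift map `σ` on `Σ_A`. -/
def shift (S : PreGDMS q N) (x : S.SigmaA) : S.SigmaA :=
  ⟨fun n => x.val (n+1), fun n => x.prop (n+1)⟩

/-- The cylinder `C_{w}` determined by a finite word `w`; its generation is the
length of `w`. -/
def cyl (S : PreGDMS q N) (w : List (Fin q)) : Set S.SigmaA :=
  {x | ∀ k : Fin w.length, x.val k = w.get k}

/-- `comp x n` is the composition `f_{x₀} ∘ f_{x₀,x₁} ∘ ⋯ ∘ f_{x_{n−1},x_n}`. -/
def comp (S : PreGDMS q N) (x : ℕ → Fin q) : ℕ → Euc N → Euc N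
  | 0 => S.f0 (x 0)
  | n + 1 => (S.comp x n) ∘ S.f (x n) (x (n+1))

/-- The metric `d_Σ(i,j) = 2^{−n}` where `n ≥ 1` is the first position at which the
sequences `i` and `j` differ (and `d_Σ(i,i) = 0`). -/
def dSig (S : PreGDMS q N) (x y : S.SigmaA) : ℝ :=
  letI := Classical.dec (x = y)
  if x = y then 0 else (2 : ℝ)⁻¹ ^ (sInf {n : ℕ | x.val n ≠ y.val n} + 1)

end PreGDMS

/-- A conformal graph directed Markov system: the data of a `PreGDMS` together with
the coding map `π : Σ_A → X`, characterized by
`{π(x)} = ⋂ₙ f_{x₀} ∘ f_{x₀,x₁} ∘ ⋯ ∘ f_{x_{n−1},x_n}(X)`. -/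
structure GDMS (q N : ℕ) extends PreGDMS q N where
  pi : toPreGDMS.SigmaA → Euc N
  hpi : ∀ x : toPreGDMS.SigmaA,
    (⋂ n : ℕ, toPreGDMS.comp x.val n '' toPreGDMS.X) = {pi x}


/-- dependent recursion with choice -/
lemma dep_rec_choice {T : ℕ → Sort*} (p0 : T 0) (R : ∀ m, T m → T (m+1) → Prop)
    (hstep : ∀ m (p : T m), ∃ p', R m p p') :
    ∃ G : ∀ m, T m, G 0 = p0 ∧ ∀ m, R m (G m) (G (m+1)) :=
  ⟨fun m => Nat.rec p0 (fun m p => (hstep m p).choose) m, rfl,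
    fun m => (hstep m _).choose_spec⟩

lemma ultra_fix {g : ℕ → ℕ} {m : ℕ} (hg : ∀ n, g n ≤ m) (U : Ultrafilter ℕ) :
    ∃ v, {n | g n = v} ∈ U := by
  by_contra h
  push_neg at h
  have h2 : ∀ v, {n | g n = v}ᶜ ∈ U := fun v =>
    Ultrafilter.compl_mem_iff_notMem.mpr (h v)
  have h3 : (⋂ v ∈ Finset.range (m+1), {n | g n = v}ᶜ) ∈ U :=
    (Filter.biInter_finset_mem _).mpr fun v _ => h2 v
  obtain ⟨n, hn⟩ := Filter.nonempty_of_mem h3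
  have h4 := Set.mem_iInter₂.mp hn (g n) (Finset.mem_range.mpr (Nat.lt_succ_of_le (hg n)))
  exact h4 rfl

lemma sum_image_le {α β : Type*} [DecidableEq β] (s : Finset α) (f : α → β)
    (g : β → ℝ≥0∞) : ∑ b ∈ s.image f, g b ≤ ∑ a ∈ s, g (f a) := by
  classical
  induction s using Finset.induction with
  | empty => simp
  | @insert a s ha ih =>
    rw [Finset.image_insert, Finset.sum_insert ha]
    by_cases hfa : f a ∈ s.image f
    · rw [Finset.insert_eq_self.mpr hfa]
      exact le_trans ih (le_add_self)
    · rw [Finset.sum_insert hfa]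
      exact add_le_add le_rfl ih

lemma sum_union_le' {β : Type*} [DecidableEq β] (s t : Finset β) (g : β → ℝ≥0∞) :
    ∑ b ∈ s ∪ t, g b ≤ (∑ b ∈ s, g b) + ∑ b ∈ t, g b := by
  rw [← Finset.union_sdiff_self_eq_union, Finset.sum_union Finset.disjoint_sdiff]
  exact add_le_add le_rfl (Finset.sum_le_sum_of_subset (Finset.sdiff_subset))

namespace GDMS

variable {q N : ℕ}

/-- The limit set `Λ_A = π(Σ_A)`. -/
def limitSet (S : GDMS q N) : Set (Euc N) := Set.range S.pi

/-- `d(C)`: the diameter of `π(C)`. -/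
def dC (S : GDMS q N) (C : Set S.SigmaA) : ℝ≥0∞ := EMetric.diam (S.pi '' C)

/-- The outer measure `M_∞^t` on subsets of `Σ_A`: infimum of `∑ d(Cᵢ)^t` over
countable covers by cylinders. -/
def Minf (S : GDMS q N) (t : ℝ) (E : Set S.SigmaA) : ℝ≥0∞ :=
  ⨅ (c : ℕ → List (Fin q)) (_ : ∀ n, c n ≠ []) (_ : E ⊆ ⋃ n, S.cyl (c n)),
    ∑' n, S.dC (S.cyl (c n)) ^ t

/-- The outer measure `𝔐_∞^t` on subsets of `ℝ^N`: infimum of `∑ |π(Cᵢ)|^t` over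
countable covers by projections of cylinders. -/
def MfrakInf (S : GDMS q N) (t : ℝ) (B : Set (Euc N)) : ℝ≥0∞ :=
  ⨅ (c : ℕ → List (Fin q)) (_ : ∀ n, c n ≠ []) (_ : B ⊆ ⋃ n, S.pi '' S.cyl (c n)),
    ∑' n, EMetric.diam (S.pi '' S.cyl (c n)) ^ t

/-- The outer measure `N_∞^{m,t}`: as `M_∞^t` but using only covers by cylinders
whose generation is a positive multiple of `m`. -/
def Ninf (S : GDMS q N) (m : ℕ) (t : ℝ) (E : Set S.SigmaA) : ℝ≥0∞ :=
  ⨅ (c : ℕ → List (Fin q)) (_ : ∀ n, c n ≠ [] ∧ m ∣ (c n).length)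
    (_ : E ⊆ ⋃ n, S.cyl (c n)),
    ∑' n, S.dC (S.cyl (c n)) ^ t

/-- The class `𝒢^t(Σ_A)`: `G_δ` sets `F ⊆ Σ_A` with `M_∞^t(F ∩ C) = M_∞^t(C)` for
every cylinder `C`. -/
def memGSigma (S : GDMS q N) (t : ℝ) (F : Set S.SigmaA) : Prop :=
  IsGδ F ∧ ∀ w : List (Fin q), w ≠ [] → S.Minf t (F ∩ S.cyl w) = S.Minf t (S.cyl w)

/-- The class `𝒢^t(Λ_A)`: `G_δ` sets `F ⊆ Λ_A` with `𝔐_∞^t(F ∩ π(C)) = 𝔐_∞^t(π(C))`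
for every cylinder `C`. -/
def memGLambda (S : GDMS q N) (t : ℝ) (F : Set (Euc N)) : Prop :=
  F ⊆ S.limitSet ∧ IsGδ F ∧ ∀ w : List (Fin q), w ≠ [] →
    S.MfrakInf t (F ∩ S.pi '' S.cyl w) = S.MfrakInf t (S.pi '' S.cyl w)

/-- The Birkhoff (ergodic) average `(1/n) ∑_{k=0}^{n−1} g(σ^k x)`. -/
def birk (S : GDMS q N) (g : S.SigmaA → ℝ) (x : S.SigmaA) (n : ℕ) : ℝ :=
  (∑ k ∈ Finset.range n, g (S.shift^[k] x)) / n

/-- `G_g(p)`: the set of `x ∈ Σ_A` such that `p` is an accumulation point of the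
sequence of ergodic averages of `g` at `x`. -/
def Gset (S : GDMS q N) (g : S.SigmaA → ℝ) (p : ℝ) : Set S.SigmaA :=
  {x | MapClusterPt p atTop (S.birk g x)}

/-- `G_g(p, M, ε) = {x ∈ Σ_A : p − ε < (1/M) ∑_{k=0}^{M−1} g(σ^k x) < p + ε}`. -/
def GsetApprox (S : GDMS q N) (g : S.SigmaA → ℝ) (p : ℝ) (M : ℕ) (ε : ℝ) : Set S.SigmaA :=
  {x | p - ε < S.birk g x M ∧ S.birk g x M < p + ε}

end GDMS

end
noncomputable section

/-! ### Auxiliary development -/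

open scoped Classical

section Aux

variable {q N : ℕ}

/-- Words over the alphabet. -/
abbrev Wd (q : ℕ) := List (Fin q)

namespace GDMS

variable (S : GDMS q N)

/-- cost of a word: `d(C)^t`. -/
def cost (t : ℝ) (w : Wd q) : ℝ≥0∞ := S.dC (S.cyl w) ^ t

lemma cost_congr (t : ℝ) {v w : Wd q} (h : S.cyl v = S.cyl w) :
    S.cost t v = S.cost t w := by unfold cost dC; rw [h]

lemma mem_cyl {w : Wd q} {x : S.SigmaA} :
    x ∈ S.cyl w ↔ ∀ k : Fin w.length, x.val k = w.get k := Iff.rfl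

lemma cyl_anti {v w : Wd q} (h : v <+: w) : S.cyl w ⊆ S.cyl v := by
  intro x hx k
  have h1 : (k : ℕ) < w.length := lt_of_lt_of_le k.isLt h.length_le
  have h2 := hx ⟨(k : ℕ), h1⟩
  simp only [List.get_eq_getElem] at *
  rw [h.getElem k.isLt]
  exact h2

lemma prefix_of_mem {v w : Wd q} {x : S.SigmaA} (hv : x ∈ S.cyl v) (hw : x ∈ S.cyl w)
    (h : v.length ≤ w.length) : v <+: w := by
  rw [List.prefix_iff_eq_take]
  apply List.ext_getElem
  · simp [Nat.min_eq_left h]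
  · intro i h1 h2
    have e1 := hv ⟨i, h1⟩
    have e2 := hw ⟨i, lt_of_lt_of_le h1 h⟩
    simp only [List.get_eq_getElem] at e1 e2
    rw [List.getElem_take]
    rw [← e1, ← e2]

/-- two cylinders through a common point are nested -/
lemma cyl_nested {v w : Wd q} {x : S.SigmaA} (hv : x ∈ S.cyl v) (hw : x ∈ S.cyl w) :
    S.cyl v ⊆ S.cyl w ∨ S.cyl w ⊆ S.cyl v := by
  rcases le_total v.length w.length with h | h
  · exact Or.inr (S.cyl_anti (S.prefix_of_mem hv hw h))
  · exact Or.inl (S.cyl_anti (S.prefix_of_mem hw hv h))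

lemma val_continuous : Continuous (fun x : S.SigmaA => x.val) :=
  continuous_induced_dom

lemma isOpen_cyl (w : Wd q) : IsOpen (S.cyl w) := by
  have h : S.cyl w = ⋂ k : Fin w.length,
      (fun x : S.SigmaA => x.val k) ⁻¹' {w.get k} := by
    ext x; simp [mem_cyl, Set.mem_iInter]
  rw [h]
  exact isOpen_iInter_of_finite fun k =>
    (IsOpen.preimage ((continuous_apply (k : ℕ)).comp S.val_continuous)
      (isOpen_discrete _))

lemma isClosed_cyl (w : Wd q) : IsClosed (S.cyl w) := by
  have h : S.cyl w = ⋂ k : Fin w.length,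
      (fun x : S.SigmaA => x.val k) ⁻¹' {w.get k} := by
    ext x; simp [mem_cyl, Set.mem_iInter]
  rw [h]
  exact isClosed_iInter fun k =>
    (IsClosed.preimage ((continuous_apply (k : ℕ)).comp S.val_continuous)
      (isClosed_discrete _))

instance : CompactSpace S.SigmaA := by
  have h : IsClosed {x : ℕ → Fin q | ∀ n, S.A (x n) (x (n+1)) = true} := by
    have e : {x : ℕ → Fin q | ∀ n, S.A (x n) (x (n+1)) = true} =
        ⋂ n, (fun x : ℕ → Fin q => (S.A (x n) (x (n+1)) : Bool)) ⁻¹' {true} := by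
      ext x; simp [Set.mem_iInter]
    rw [e]
    refine isClosed_iInter fun n => IsClosed.preimage ?_ (isClosed_discrete _)
    have : (fun x : ℕ → Fin q => (S.A (x n) (x (n+1)) : Bool)) =
        (fun p : Fin q × Fin q => S.A p.1 p.2) ∘ (fun x => (x n, x (n+1))) := rfl
    rw [this]
    exact (continuous_of_discreteTopology).comp
      ((continuous_apply n).prodMk (continuous_apply (n+1)))
  exact isCompact_iff_compactSpace.mp h.isCompact

/-- the initial word of length `n` of a point -/
def pw (x : S.SigmaA) (n : ℕ) : Wd q := List.ofFn (fun k : Fin n => x.val k)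

@[simp] lemma pw_length (x : S.SigmaA) (n : ℕ) : (S.pw x n).length = n := by
  simp [pw]

lemma mem_cyl_pw (x : S.SigmaA) (n : ℕ) : x ∈ S.cyl (S.pw x n) := by
  intro k
  exact (List.get_ofFn (fun k : Fin n => x.val k) _).symm

lemma mem_cyl_pw_iff {x y : S.SigmaA} {n : ℕ} :
    y ∈ S.cyl (S.pw x n) ↔ ∀ k < n, y.val k = x.val k := by
  constructor
  · intro h k hk
    have hk' : k < (S.pw x n).length := by simpa using hk
    have := h ⟨k, hk'⟩
    simpa [pw, List.get_ofFn] using this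
  · intro h k
    have hk : (k : ℕ) < n := by
      have := k.isLt; simpa [pw] using this
    rw [h k hk]; exact (List.get_ofFn (fun k : Fin n => x.val k) _).symm

lemma exists_cyl_subset_of_isOpen {U : Set S.SigmaA} (hU : IsOpen U) {x : S.SigmaA}
    (hx : x ∈ U) : ∃ n, 0 < n ∧ S.cyl (S.pw x n) ⊆ U := by
  obtain ⟨V, hVopen, hpre⟩ := isOpen_induced_iff.mp hU
  have hxV : x.val ∈ V := by rw [← hpre] at hx; exact hx
  obtain ⟨I, u, hu, hsub⟩ := isOpen_pi_iff.mp hVopen x.val hxV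
  refine ⟨I.sup id + 1, Nat.succ_pos _, ?_⟩
  intro y hy
  have hyV : y.val ∈ V := by
    apply hsub
    intro a ha
    have ha' : a < I.sup id + 1 :=
      Nat.lt_succ_of_le (Finset.le_sup (f := id) ha)
    have : y.val a = x.val a := (S.mem_cyl_pw_iff).mp hy a ha'
    rw [this]
    exact (hu a ha).2
  rw [← hpre]
  exact hyV

lemma nonempty_SigmaA : Nonempty S.SigmaA := by
  obtain ⟨n, hn, w, hw0, hwn, hstep⟩ := S.trans ⟨0, S.hq⟩ ⟨0, S.hq⟩
  refine ⟨⟨fun k => w (k % n), fun k => ?_⟩⟩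
  show S.A (w (k % n)) (w ((k+1) % n)) = true
  have hmod : ∀ m : ℕ, m % n < n := fun m => Nat.mod_lt _ hn
  have hsucc : (k+1) % n = (k % n + 1) % n := by
    conv_lhs => rw [← Nat.mod_add_mod]
  by_cases h : k % n + 1 < n
  · rw [hsucc, Nat.mod_eq_of_lt h]
    exact hstep _ (by omega)
  · have h2 : k % n + 1 = n := by have := hmod k; omega
    rw [hsucc, h2, Nat.mod_self, hw0, ← hwn]
    have h3 := hstep (k % n) (hmod k)
    rwa [h2] at h3

lemma pw_eq_of_mem {x : S.SigmaA} {w : Wd q} (h : x ∈ S.cyl w) :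
    S.pw x w.length = w := by
  apply List.ext_getElem
  · simp
  · intro i h1 h2
    have := h ⟨i, h2⟩
    simp only [List.get_eq_getElem] at this
    simpa [pw, List.getElem_ofFn] using this

lemma comp_congr (a b : ℕ → Fin q) (n : ℕ) (h : ∀ k ≤ n, a k = b k) :
    S.comp a n = S.comp b n := by
  induction n with
  | zero =>
    show S.f0 (a 0) = S.f0 (b 0)
    rw [h 0 le_rfl]
  | succ n ih =>
    show (S.comp a n) ∘ S.f (a n) (a (n+1)) = (S.comp b n) ∘ S.f (b n) (b (n+1))
    rw [ih (fun k hk => h k (le_trans hk (Nat.le_succ n))),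
      h n (Nat.le_succ n), h (n+1) le_rfl]

lemma pi_mem_comp (x : S.SigmaA) (n : ℕ) :
    S.pi x ∈ S.comp x.val n '' S.X := by
  have h := S.hpi x
  have h2 : S.pi x ∈ ⋂ n, S.comp x.val n '' S.X := by
    rw [h]; exact rfl
  exact Set.mem_iInter.mp h2 n

lemma pi_mem_X (x : S.SigmaA) : S.pi x ∈ S.X := by
  obtain ⟨y, hy, hxy⟩ := S.pi_mem_comp x 0
  rw [← hxy]
  exact S.f0maps _ hy

lemma dC_ne_top (E : Set S.SigmaA) : S.dC E ≠ ⊤ := by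
  have h1 : S.pi '' E ⊆ S.X := by
    rintro y ⟨x, _, rfl⟩; exact S.pi_mem_X x
  have h2 : EMetric.diam (S.pi '' E) ≤ EMetric.diam S.X := EMetric.diam_mono h1
  have h3 : EMetric.diam S.X ≠ ⊤ := S.Xcompact.isBounded.ediam_ne_top
  exact fun h => h3 (top_le_iff.mp (le_of_eq_of_le h.symm h2))

lemma cost_ne_top {t : ℝ} (ht : 0 < t) (w : Wd q) : S.cost t w ≠ ⊤ :=
  (ENNReal.rpow_lt_top_of_nonneg ht.le (S.dC_ne_top _)).ne

/-- small cylinders exist: arbitrarily small diameter -/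
lemma exists_small_diam {ρ : ℝ≥0∞} (hρ : 0 < ρ) :
    ∃ w : Wd q, w ≠ [] ∧ S.dC (S.cyl w) ≤ ρ := by
  obtain ⟨x⟩ := S.nonempty_SigmaA
  by_cases hρtop : ρ = ⊤
  · exact ⟨S.pw x 1, by simp [pw], by rw [hρtop]; exact le_top⟩
  have hcont : ∀ n, ContinuousOn (S.comp x.val n) S.X := by
    intro n
    induction n with
    | zero =>
      show ContinuousOn (S.f0 (x.val 0)) S.X
      intro y hy
      exact ((S.conformal0 _ y hy).1.continuousAt).continuousWithinAt
    | succ n ih =>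
      show ContinuousOn ((S.comp x.val n) ∘ S.f (x.val n) (x.val (n+1))) S.X
      refine ContinuousOn.comp ih ?_ (S.fmaps _ _ (x.prop n))
      intro y hy
      exact ((S.conformal1 _ _ (x.prop n) y hy).1.continuousAt).continuousWithinAt
  have hcomp : ∀ n, IsCompact (S.comp x.val n '' S.X) := fun n =>
    S.Xcompact.image_of_continuousOn (hcont n)
  have hanti : ∀ n, S.comp x.val (n+1) '' S.X ⊆ S.comp x.val n '' S.X := by
    intro n
    have e : S.comp x.val (n+1) = S.comp x.val n ∘ S.f (x.val n) (x.val (n+1)) := rfl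
    rw [e, Set.image_comp]
    exact Set.image_mono ((S.fmaps _ _ (x.prop n)).image_subset)
  have hAnti : Antitone (fun n => S.comp x.val n '' S.X) :=
    antitone_nat_of_succ_le hanti
  have hU : EMetric.ball (S.pi x) (ρ/2) ∈ 𝓝 (S.pi x) :=
    EMetric.ball_mem_nhds _ (ENNReal.div_pos hρ.ne' (by norm_num))
  have hmem : ∀ y ∈ ⋂ n, S.comp x.val n '' S.X,
      EMetric.ball (S.pi x) (ρ/2) ∈ 𝓝 y := by
    intro y hy
    rw [S.hpi x] at hy
    rw [Set.mem_singleton_iff.mp hy]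
    exact hU
  obtain ⟨n, hn⟩ := exists_subset_nhds_of_isCompact' hAnti.directed_ge hcomp
    (fun n => (hcomp n).isClosed) hmem
  refine ⟨S.pw x (n+1), by simp [pw], ?_⟩
  have himg : S.pi '' S.cyl (S.pw x (n+1)) ⊆ EMetric.ball (S.pi x) (ρ/2) := by
    rintro z ⟨y, hy, rfl⟩
    apply hn
    have h1 : S.pi y ∈ S.comp y.val n '' S.X := S.pi_mem_comp y n
    have h2 : S.comp y.val n = S.comp x.val n := by
      apply S.comp_congr
      intro k hk
      exact (S.mem_cyl_pw_iff).mp hy k (Nat.lt_succ_of_le hk)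
    rwa [h2] at h1
  calc S.dC (S.cyl (S.pw x (n+1)))
      ≤ EMetric.diam (EMetric.ball (S.pi x) (ρ/2)) := EMetric.diam_mono himg
    _ ≤ 2 * (ρ/2) := EMetric.diam_ball
    _ = ρ := by rw [two_mul, ENNReal.add_halves]

/-- existence of arbitrarily cheap nonempty words -/
lemma exists_small_word {t : ℝ} (ht : 0 < t) {η : ℝ≥0∞} (hη : 0 < η) :
    ∃ w : Wd q, w ≠ [] ∧ S.cost t w ≤ η := by
  set η' := min 1 η with hη'
  have hη'pos : 0 < η' := lt_min one_pos hη
  have hη'top : η' ≠ ⊤ := (lt_of_le_of_lt (min_le_left _ _) (by norm_num)).ne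
  have hρpos : 0 < η' ^ t⁻¹ := ENNReal.rpow_pos hη'pos hη'top
  obtain ⟨w, hw, hdiam⟩ := S.exists_small_diam hρpos
  refine ⟨w, hw, ?_⟩
  have h1 : S.cost t w ≤ (η' ^ t⁻¹) ^ t :=
    ENNReal.rpow_le_rpow hdiam ht.le
  have h2 : (η' ^ t⁻¹) ^ t = η' := by
    rw [← ENNReal.rpow_mul, inv_mul_cancel₀ ht.ne', ENNReal.rpow_one]
  exact le_trans h1 (le_trans (le_of_eq h2) (min_le_right _ _))

/-- a padding sequence of nonempty words of total cost at most `η` -/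
lemma exists_pad {t : ℝ} (ht : 0 < t) {η : ℝ≥0∞} (hη : 0 < η) :
    ∃ c : ℕ → Wd q, (∀ k, c k ≠ []) ∧ ∑' k, S.cost t (c k) ≤ η := by
  have hpos : ∀ k : ℕ, 0 < η * (2⁻¹ : ℝ≥0∞) ^ (k+1) := by
    intro k
    refine ENNReal.mul_pos hη.ne' ?_
    exact pow_ne_zero _ (by norm_num)
  choose c hc1 hc2 using fun k => S.exists_small_word ht (hpos k)
  refine ⟨c, hc1, ?_⟩
  calc ∑' k, S.cost t (c k) ≤ ∑' k, η * (2⁻¹ : ℝ≥0∞) ^ (k+1) :=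
        ENNReal.tsum_le_tsum hc2
    _ = η * ∑' k, (2⁻¹ : ℝ≥0∞) ^ (k+1) := ENNReal.tsum_mul_left
    _ = η * 1 := by
        congr 1
        have : ∀ k : ℕ, (2⁻¹ : ℝ≥0∞) ^ (k+1) = 2⁻¹ * (2⁻¹) ^ k := fun k => by
          rw [pow_succ]; ring
        rw [tsum_congr this, ENNReal.tsum_mul_left, ENNReal.tsum_geometric,
          ENNReal.one_sub_inv_two, inv_inv]
        exact ENNReal.inv_mul_cancel (by norm_num) (by norm_num)
    _ = η := mul_one η

/-! ### Basic properties of `Minf` -/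

lemma Minf_le_of_cover {t : ℝ} {E : Set S.SigmaA} {c : ℕ → Wd q}
    (h1 : ∀ n, c n ≠ []) (h2 : E ⊆ ⋃ n, S.cyl (c n)) :
    S.Minf t E ≤ ∑' n, S.cost t (c n) := by
  refine iInf_le_of_le c (iInf_le_of_le h1 (iInf_le_of_le h2 le_rfl))

lemma exists_cover_of_lt {t : ℝ} {E : Set S.SigmaA} {r : ℝ≥0∞} (h : S.Minf t E < r) :
    ∃ c : ℕ → Wd q, (∀ n, c n ≠ []) ∧ E ⊆ (⋃ n, S.cyl (c n)) ∧
      ∑' n, S.cost t (c n) < r := by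
  unfold Minf at h
  simp only [iInf_lt_iff] at h
  obtain ⟨c, h1, h2, h3⟩ := h
  exact ⟨c, h1, h2, h3⟩

lemma Minf_mono {t : ℝ} {E E' : Set S.SigmaA} (h : E ⊆ E') :
    S.Minf t E ≤ S.Minf t E' := by
  refine le_iInf fun c => le_iInf fun h1 => le_iInf fun h2 => ?_
  exact S.Minf_le_of_cover h1 (h.trans h2)

lemma Minf_congr {t : ℝ} {E E' : Set S.SigmaA} (h : E = E') :
    S.Minf t E = S.Minf t E' := by rw [h]

lemma Minf_empty {t : ℝ} (ht : 0 < t) : S.Minf t (∅ : Set S.SigmaA) = 0 := by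
  refine le_antisymm ?_ (zero_le)
  refine ENNReal.le_of_forall_pos_le_add fun ε hε _ => ?_
  obtain ⟨c, hc1, hc2⟩ := S.exists_pad ht (η := (ε : ℝ≥0∞))
    (by exact_mod_cast hε)
  calc S.Minf t ∅ ≤ ∑' n, S.cost t (c n) :=
        S.Minf_le_of_cover hc1 (Set.empty_subset _)
    _ ≤ (ε : ℝ≥0∞) := hc2
    _ = 0 + ε := (zero_add _).symm

/-- countable subadditivity (master covering lemma) -/
lemma Minf_le_tsum {t : ℝ} (ht : 0 < t) {E : Set S.SigmaA} {G : ℕ → Set S.SigmaA}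
    (h : E ⊆ ⋃ n, G n) : S.Minf t E ≤ ∑' n, S.Minf t (G n) := by
  by_cases htop : ∃ n, S.Minf t (G n) = ⊤
  · obtain ⟨n, hn⟩ := htop
    calc S.Minf t E ≤ ⊤ := le_top
      _ = S.Minf t (G n) := hn.symm
      _ ≤ ∑' n, S.Minf t (G n) := ENNReal.le_tsum n
  push_neg at htop
  refine ENNReal.le_of_forall_pos_le_add fun ε hε _ => ?_
  have hεpos : ∀ n : ℕ, (0:ℝ≥0∞) < (ε : ℝ≥0∞) * (2⁻¹) ^ (n+1) := by
    intro n
    refine ENNReal.mul_pos (by exact_mod_cast hε.ne') (pow_ne_zero _ (by norm_num))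
  have hlt : ∀ n, S.Minf t (G n) < S.Minf t (G n) + (ε : ℝ≥0∞) * (2⁻¹) ^ (n+1) :=
    fun n => ENNReal.lt_add_right (htop n) (hεpos n).ne'
  choose c hc1 hc2 hc3 using fun n => S.exists_cover_of_lt (hlt n)
  let e : ℕ ≃ ℕ × ℕ := (Denumerable.eqv (ℕ × ℕ)).symm
  refine le_trans (S.Minf_le_of_cover (c := fun m => c (e m).1 (e m).2)
    (fun m => hc1 _ _) ?_) ?_
  · intro x hx
    obtain ⟨n, hn⟩ := Set.mem_iUnion.mp (h hx)
    obtain ⟨k, hk⟩ := Set.mem_iUnion.mp (hc2 n hn)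
    refine Set.mem_iUnion.mpr ⟨e.symm (n, k), ?_⟩
    simpa using hk
  · have e1 : ∑' m, S.cost t (c (e m).1 (e m).2) =
        ∑' p : ℕ × ℕ, S.cost t (c p.1 p.2) :=
      Equiv.tsum_eq e (fun p => S.cost t (c p.1 p.2))
    rw [e1, ENNReal.tsum_prod (f := fun a b => S.cost t (c a b))]
    calc ∑' (n : ℕ) (k : ℕ), S.cost t (c n k)
        ≤ ∑' n, (S.Minf t (G n) + (ε : ℝ≥0∞) * (2⁻¹) ^ (n+1)) :=
          ENNReal.tsum_le_tsum fun n => (hc3 n).le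
      _ = (∑' n, S.Minf t (G n)) + (ε : ℝ≥0∞) * ∑' n, ((2⁻¹ : ℝ≥0∞)) ^ (n+1) := by
          rw [ENNReal.tsum_add, ENNReal.tsum_mul_left]
      _ ≤ (∑' n, S.Minf t (G n)) + (ε : ℝ≥0∞) := by
          have h1 : ∀ n : ℕ, (2⁻¹ : ℝ≥0∞) ^ (n+1) = 2⁻¹ * (2⁻¹) ^ n := fun n => by
            rw [pow_succ]; ring
          have h2 : (∑' n : ℕ, ((2⁻¹:ℝ≥0∞)) ^ (n+1)) = 1 := by
            rw [tsum_congr h1, ENNReal.tsum_mul_left, ENNReal.tsum_geometric,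
              ENNReal.one_sub_inv_two, inv_inv]
            exact ENNReal.inv_mul_cancel (by norm_num) (by norm_num)
          rw [h2, mul_one]

lemma Minf_union_le {t : ℝ} (ht : 0 < t) (E E' : Set S.SigmaA) :
    S.Minf t (E ∪ E') ≤ S.Minf t E + S.Minf t E' := by
  refine ENNReal.le_of_forall_pos_le_add fun ε hε htop => ?_
  have hE : S.Minf t E ≠ ⊤ := (ENNReal.add_lt_top.mp htop).1.ne
  have hE' : S.Minf t E' ≠ ⊤ := (ENNReal.add_lt_top.mp htop).2.ne
  have hε2 : (0:ℝ≥0∞) < (ε : ℝ≥0∞) / 2 := ENNReal.div_pos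
    (by exact_mod_cast hε.ne') (by norm_num)
  obtain ⟨c1, hc11, hc12, hc13⟩ := S.exists_cover_of_lt
    (ENNReal.lt_add_right hE hε2.ne' : S.Minf t E < S.Minf t E + (ε : ℝ≥0∞)/2)
  obtain ⟨c2, hc21, hc22, hc23⟩ := S.exists_cover_of_lt
    (ENNReal.lt_add_right hE' hε2.ne' : S.Minf t E' < S.Minf t E' + (ε : ℝ≥0∞)/2)
  set c : ℕ → Wd q := fun n => if Even n then c1 (n/2) else c2 (n/2) with hc
  have h1 : ∀ n, c n ≠ [] := by
    intro n
    by_cases hn : Even n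
    · simp only [hc, if_pos hn]; exact hc11 _
    · simp only [hc, if_neg hn]; exact hc21 _
  have h2 : E ∪ E' ⊆ ⋃ n, S.cyl (c n) := by
    rintro x (hx | hx)
    · obtain ⟨k, hk⟩ := Set.mem_iUnion.mp (hc12 hx)
      refine Set.mem_iUnion.mpr ⟨2*k, ?_⟩
      have he : Even (2*k) := even_two_mul k
      have : c (2*k) = c1 k := by simp [hc, if_pos he]
      rw [this]; exact hk
    · obtain ⟨k, hk⟩ := Set.mem_iUnion.mp (hc22 hx)
      refine Set.mem_iUnion.mpr ⟨2*k+1, ?_⟩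
      have he : ¬ Even (2*k+1) := by simp [Nat.even_add_one, Nat.even_mul]
      have : c (2*k+1) = c2 k := by
        simp only [hc, if_neg he]
        congr 1
        omega
      rw [this]; exact hk
  refine le_trans (S.Minf_le_of_cover h1 h2) ?_
  have e1 : ∑' n, S.cost t (c n) =
      (∑' k, S.cost t (c (2*k))) + ∑' k, S.cost t (c (2*k+1)) :=
    (tsum_even_add_odd ENNReal.summable ENNReal.summable).symm
  have e2 : ∀ k, c (2*k) = c1 k := fun k => by
    simp only [hc, if_pos (even_two_mul k)]
    congr 1
    omega
  have e3 : ∀ k, c (2*k+1) = c2 k := fun k => by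
    have he : ¬ Even (2*k+1) := by simp [Nat.even_add_one, Nat.even_mul]
    simp only [hc, if_neg he]
    congr 1
    omega
  rw [e1]
  have e4 : (∑' k : ℕ, S.cost t (c (2*k))) = ∑' k : ℕ, S.cost t (c1 k) :=
    tsum_congr fun k => by rw [e2 k]
  have e5 : (∑' k : ℕ, S.cost t (c (2*k+1))) = ∑' k : ℕ, S.cost t (c2 k) :=
    tsum_congr fun k => by rw [e3 k]
  rw [e4, e5]
  calc (∑' k, S.cost t (c1 k)) + ∑' k, S.cost t (c2 k)
      ≤ (S.Minf t E + (ε : ℝ≥0∞)/2) + (S.Minf t E' + (ε : ℝ≥0∞)/2) :=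
        add_le_add hc13.le hc23.le
    _ = S.Minf t E + S.Minf t E' + ((ε : ℝ≥0∞)/2 + (ε : ℝ≥0∞)/2) := by ring
    _ = S.Minf t E + S.Minf t E' + (ε : ℝ≥0∞) := by rw [ENNReal.add_halves]

lemma Minf_cyl_le_cost {t : ℝ} (ht : 0 < t) {w : Wd q} (hw : w ≠ []) :
    S.Minf t (S.cyl w) ≤ S.cost t w := by
  refine ENNReal.le_of_forall_pos_le_add fun ε hε _ => ?_
  obtain ⟨p, hp1, hp2⟩ := S.exists_pad ht (η := (ε : ℝ≥0∞)) (by exact_mod_cast hε)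
  set c : ℕ → Wd q := fun n => match n with
    | 0 => w
    | k+1 => p k with hc
  have h1 : ∀ n, c n ≠ [] := by
    intro n; match n with
    | 0 => exact hw
    | k+1 => exact hp1 k
  have h2 : S.cyl w ⊆ ⋃ n, S.cyl (c n) := fun x hx => Set.mem_iUnion.mpr ⟨0, hx⟩
  refine le_trans (S.Minf_le_of_cover h1 h2) ?_
  have e1 : ∑' n, S.cost t (c n) = S.cost t w + ∑' k, S.cost t (p k) := by
    rw [tsum_eq_zero_add' ENNReal.summable]
  rw [e1]
  exact add_le_add le_rfl hp2

/-- finite subadditivity against a finite family of cylinders -/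
lemma Minf_le_finsum {t : ℝ} (ht : 0 < t) {E : Set S.SigmaA} {B : Finset (Wd q)}
    (h : E ⊆ ⋃ w ∈ B, S.cyl w) : S.Minf t E ≤ ∑ w ∈ B, S.Minf t (S.cyl w) := by
  induction B using Finset.induction generalizing E with
  | empty =>
    simp only [Finset.notMem_empty, Set.iUnion_of_empty, Set.iUnion_empty,
      Set.subset_empty_iff] at h
    rw [h, S.Minf_empty ht]
    simp
  | @insert w B hw ih =>
    have h2 : E ⊆ S.cyl w ∪ ⋃ v ∈ B, S.cyl v := by
      intro x hx
      have h3 := h hx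
      rw [Finset.set_biUnion_insert] at h3
      exact h3
    calc S.Minf t E ≤ S.Minf t (S.cyl w ∪ ⋃ v ∈ B, S.cyl v) := S.Minf_mono h2
      _ ≤ S.Minf t (S.cyl w) + S.Minf t (⋃ v ∈ B, S.cyl v) := S.Minf_union_le ht _ _
      _ ≤ S.Minf t (S.cyl w) + ∑ v ∈ B, S.Minf t (S.cyl v) := by
          gcongr
          exact ih le_rfl
      _ = ∑ v ∈ insert w B, S.Minf t (S.cyl v) :=
          (Finset.sum_insert (f := fun v => S.Minf t (S.cyl v)) hw).symm

lemma Minf_le_finsum_idx {t : ℝ} (ht : 0 < t) {E : Set S.SigmaA} {s : Finset ℕ}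
    {cw : ℕ → Wd q} (hne : ∀ i ∈ s, cw i ≠ []) (h : E ⊆ ⋃ i ∈ s, S.cyl (cw i)) :
    S.Minf t E ≤ ∑ i ∈ s, S.cost t (cw i) := by
  have h1 : E ⊆ ⋃ w ∈ s.image cw, S.cyl w := by
    intro x hx
    obtain ⟨i, hi, hxi⟩ := Set.mem_iUnion₂.mp (h hx)
    exact Set.mem_iUnion₂.mpr ⟨cw i, Finset.mem_image_of_mem cw hi, hxi⟩
  calc S.Minf t E ≤ ∑ w ∈ s.image cw, S.Minf t (S.cyl w) := S.Minf_le_finsum ht h1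
    _ ≤ ∑ i ∈ s, S.Minf t (S.cyl (cw i)) := sum_image_le s cw _
    _ ≤ ∑ i ∈ s, S.cost t (cw i) :=
        Finset.sum_le_sum fun i hi => S.Minf_cyl_le_cost ht (hne i hi)

lemma Minf_lt_top {t : ℝ} (ht : 0 < t) (E : Set S.SigmaA) : S.Minf t E < ⊤ := by
  set B : Finset (Wd q) := Finset.univ.image (fun i : Fin q => [i]) with hB
  have h : E ⊆ ⋃ w ∈ B, S.cyl w := by
    intro x _
    refine Set.mem_iUnion₂.mpr ⟨[x.val 0], ?_, ?_⟩
    · exact Finset.mem_image_of_mem _ (Finset.mem_univ _)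
    · intro k
      have hk : (k : ℕ) = 0 := Nat.lt_one_iff.mp (by simpa using k.isLt)
      have hk0 : k = ⟨0, by simp⟩ := Fin.ext hk
      rw [hk0]
      rfl
  refine lt_of_le_of_lt (S.Minf_le_finsum ht h) ?_
  refine ENNReal.sum_lt_top.mpr fun w hw => ?_
  obtain ⟨i, _, rfl⟩ := Finset.mem_image.mp hw
  exact lt_of_le_of_lt (S.Minf_cyl_le_cost ht (by simp))
    (lt_top_iff_ne_top.mpr (S.cost_ne_top ht _))

lemma finite_cover_of_Minf_lt {t : ℝ} {E : Set S.SigmaA} {r : ℝ≥0∞}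
    (hE : IsCompact E) (h : S.Minf t E < r) :
    ∃ (s : Finset ℕ) (cw : ℕ → Wd q), (∀ i ∈ s, cw i ≠ []) ∧
      E ⊆ (⋃ i ∈ s, S.cyl (cw i)) ∧ ∑ i ∈ s, S.cost t (cw i) < r := by
  obtain ⟨c, hc1, hc2, hc3⟩ := S.exists_cover_of_lt h
  obtain ⟨s, hs⟩ := hE.elim_finite_subcover (fun n => S.cyl (c n))
    (fun n => S.isOpen_cyl _) hc2
  refine ⟨s, c, fun i _ => hc1 i, hs, lt_of_le_of_lt ?_ hc3⟩
  exact Summable.sum_le_tsum s (fun i _ => zero_le) ENNReal.summable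

/-! ### decomposition of open sets -/

lemma open_decomp {V : Set S.SigmaA} (hV : IsOpen V) :
    ∃ (A : ℕ → Wd q) (J : Set ℕ),
      (∀ j ∈ J, A j ≠ [] ∧ (S.cyl (A j)).Nonempty ∧ S.cyl (A j) ⊆ V) ∧
      (∀ j ∈ J, ∀ j' ∈ J, j ≠ j' → Disjoint (S.cyl (A j)) (S.cyl (A j'))) ∧
      V = ⋃ j ∈ J, S.cyl (A j) := by
  haveI : Nonempty (Fin q) := ⟨⟨0, S.hq⟩⟩
  haveI : Infinite (Wd q) := inferInstance
  haveI : Denumerable (Wd q) := Denumerable.ofEncodableOfInfinite _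
  have hn : ∀ x, x ∈ V → ∃ n, 0 < n ∧ S.cyl (S.pw x n) ⊆ V := fun x hx =>
    S.exists_cyl_subset_of_isOpen hV hx
  let nx : ∀ x, x ∈ V → ℕ := fun x hx => Nat.find (hn x hx)
  let W : Set (Wd q) := {w | ∃ x, ∃ hx : x ∈ V, w = S.pw x (nx x hx)}
  let e : Wd q ≃ ℕ := Denumerable.eqv (Wd q)
  have hWprop : ∀ w ∈ W, w ≠ [] ∧ (S.cyl w).Nonempty ∧ S.cyl w ⊆ V := by
    rintro w ⟨x, hx, rfl⟩
    have h1 := (Nat.find_spec (hn x hx)).1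
    have h2 := (Nat.find_spec (hn x hx)).2
    refine ⟨?_, ⟨x, S.mem_cyl_pw x _⟩, h2⟩
    apply List.ne_nil_of_length_pos
    rw [S.pw_length]
    exact h1
  have key : ∀ (x) (hx : x ∈ V) (y) (hy : y ∈ V) (z : S.SigmaA),
      nx x hx ≤ nx y hy → z ∈ S.cyl (S.pw x (nx x hx)) →
      z ∈ S.cyl (S.pw y (nx y hy)) → S.pw x (nx x hx) = S.pw y (nx y hy) := by
    intro x hx y hy z hab hz hz'
    have hlen : (S.pw x (nx x hx)).length ≤ (S.pw y (nx y hy)).length := by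
      rw [S.pw_length, S.pw_length]; exact hab
    have hpre : S.pw x (nx x hx) <+: S.pw y (nx y hy) :=
      S.prefix_of_mem hz hz' hlen
    have hyw : y ∈ S.cyl (S.pw x (nx x hx)) :=
      S.cyl_anti hpre (S.mem_cyl_pw y _)
    have heq : S.pw y (nx x hx) = S.pw x (nx x hx) := by
      have h3 := S.pw_eq_of_mem hyw
      rwa [S.pw_length] at h3
    have hle : nx y hy ≤ nx x hx := by
      apply Nat.find_le
      refine ⟨(Nat.find_spec (hn x hx)).1, ?_⟩
      rw [heq]
      exact (Nat.find_spec (hn x hx)).2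
    have hab2 : nx x hx = nx y hy := le_antisymm hab hle
    rw [← hab2, heq]
  refine ⟨fun n => e.symm n, {n | e.symm n ∈ W}, ?_, ?_, ?_⟩
  · intro j hj
    exact hWprop _ hj
  · intro j hj j' hj' hjj'
    rw [Set.disjoint_left]
    intro z hz hz'
    obtain ⟨x, hx, hxw⟩ := hj
    obtain ⟨y, hy, hyw⟩ := hj'
    have hne : e.symm j ≠ e.symm j' := fun h => hjj' (e.symm.injective h)
    rcases le_total (nx x hx) (nx y hy) with hab | hab
    · refine hne ?_
      rw [hxw, hyw]
      exact key x hx y hy z hab (hxw ▸ hz) (hyw ▸ hz')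
    · refine hne ?_
      rw [hxw, hyw]
      exact (key y hy x hx z hab (hyw ▸ hz') (hxw ▸ hz)).symm
  · ext z
    constructor
    · intro hz
      refine Set.mem_iUnion₂.mpr ⟨e (S.pw z (nx z hz)), ?_, ?_⟩
      · show e.symm (e _) ∈ W
        rw [Equiv.symm_apply_apply]
        exact ⟨z, hz, rfl⟩
      · show z ∈ S.cyl (e.symm (e _))
        rw [Equiv.symm_apply_apply]
        exact S.mem_cyl_pw z _
    · intro hz
      obtain ⟨j, hj, hzj⟩ := Set.mem_iUnion₂.mp hz
      exact (hWprop _ hj).2.2 hzj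

/-! ### the increasing sets lemma -/

lemma ISL {t : ℝ} (ht : 0 < t) (A : ℕ → Wd q) (J : Set ℕ)
    (hA : ∀ j ∈ J, A j ≠ [] ∧ (S.cyl (A j)).Nonempty)
    (hdisj : ∀ j ∈ J, ∀ j' ∈ J, j ≠ j' → Disjoint (S.cyl (A j)) (S.cyl (A j')))
    (c : ℝ≥0∞)
    (hcov : ∀ n : ℕ, ∃ (s : Finset ℕ) (cw : ℕ → Wd q), (∀ i ∈ s, cw i ≠ []) ∧
      (⋃ j ∈ J ∩ Set.Iio n, S.cyl (A j)) ⊆ (⋃ i ∈ s, S.cyl (cw i)) ∧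
      ∑ i ∈ s, S.cost t (cw i) < c) :
    S.Minf t (⋃ j ∈ J, S.cyl (A j)) ≤ c := by
  choose sB cwB hne hcover hsum using hcov
  let U : Ultrafilter ℕ := Ultrafilter.of atTop
  have hatTop : ∀ s ∈ (atTop : Filter ℕ), s ∈ U := fun s hs =>
    (Ultrafilter.of_le atTop) hs
  set short : ℕ → ℕ → Prop := fun n j =>
    ∃ k, 0 < k ∧ k ≤ (A j).length ∧ ∃ i ∈ sB n, cwB n i = (A j).take k
    with hshort
  set typ : ℕ → ℕ → ℕ := fun n j =>
    if h : short n j then Nat.find h + 2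
    else if (∃ i ∈ sB n, S.cyl (A j) ⊆ S.cyl (cwB n i)) then 1 else 0
    with htyp
  have htypbd : ∀ j n, typ n j ≤ (A j).length + 2 := by
    intro j n
    rw [htyp]
    by_cases h : short n j
    · simp only [dif_pos h]
      have h1 := Nat.find_min' h h.choose_spec
      have h2 := h.choose_spec.2.1
      omega
    · simp only [dif_neg h]
      split <;> omega
  have hval : ∀ j : ℕ, ∃ v, {n | typ n j = v} ∈ U := fun j =>
    ultra_fix (htypbd j) U
  choose v hv using hval
  set wj : ℕ → Wd q := fun j => (A j).take (v j - 2) with hwjdef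
  have hextS : ∀ n j, 2 ≤ typ n j → 0 < typ n j - 2 ∧ typ n j - 2 ≤ (A j).length ∧
      ∃ i ∈ sB n, cwB n i = (A j).take (typ n j - 2) := by
    intro n j h2
    by_cases hs : short n j
    · have htv : typ n j = Nat.find hs + 2 := by rw [htyp]; simp only [dif_pos hs]
      obtain ⟨h1, hle, hi⟩ := Nat.find_spec hs
      have he : typ n j - 2 = Nat.find hs := by omega
      rw [he]
      exact ⟨h1, hle, hi⟩
    · exfalso
      have hle : typ n j ≤ 1 := by
        rw [htyp]; simp only [dif_neg hs]; split <;> omega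
      omega
  have hextD : ∀ n j, typ n j = 1 → ¬ short n j ∧
      ∃ i ∈ sB n, S.cyl (A j) ⊆ S.cyl (cwB n i) := by
    intro n j h1
    by_cases hs : short n j
    · exfalso
      have : typ n j = Nat.find hs + 2 := by rw [htyp]; simp only [dif_pos hs]
      omega
    · refine ⟨hs, ?_⟩
      by_contra hc
      have : typ n j = 0 := by rw [htyp]; simp only [dif_neg hs, if_neg hc]
      omega
  have hext0 : ∀ n j, typ n j = 0 → ¬ short n j ∧
      ¬ ∃ i ∈ sB n, S.cyl (A j) ⊆ S.cyl (cwB n i) := by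
    intro n j h1
    by_cases hs : short n j
    · exfalso
      have : typ n j = Nat.find hs + 2 := by rw [htyp]; simp only [dif_pos hs]
      omega
    · refine ⟨hs, ?_⟩
      by_contra hc
      have : typ n j = 1 := by rw [htyp]; simp only [dif_neg hs, if_pos hc]
      omega
  have hnotshort : ∀ n j, j ∈ J → ¬ short n j → ∀ i ∈ sB n,
      S.cyl (A j) ⊆ S.cyl (cwB n i) → S.cyl (cwB n i) = S.cyl (A j) := by
    intro n j hj hs i hi hsub
    obtain ⟨x, hx⟩ := (hA j hj).2
    have hxc : x ∈ S.cyl (cwB n i) := hsub hx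
    rcases le_total (cwB n i).length (A j).length with hl | hl
    · exfalso
      have hpre : cwB n i <+: A j := S.prefix_of_mem hxc hx hl
      refine hs ⟨(cwB n i).length, List.length_pos_iff.mpr (hne n i hi), hl,
        ⟨i, hi, List.prefix_iff_eq_take.mp hpre⟩⟩
    · have hpre : A j <+: cwB n i := S.prefix_of_mem hx hxc hl
      exact Set.Subset.antisymm (S.cyl_anti hpre) hsub
  have hnocontain : ∀ n j, j ∈ J →
      (¬ ∃ i ∈ sB n, S.cyl (A j) ⊆ S.cyl (cwB n i)) → ∀ i ∈ sB n,
      (S.cyl (cwB n i) ∩ S.cyl (A j)).Nonempty → S.cyl (cwB n i) ⊆ S.cyl (A j) := by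
    intro n j hj hc i hi hint
    obtain ⟨x, hx1, hx2⟩ := hint
    rcases le_total (cwB n i).length (A j).length with hl | hl
    · exfalso
      have hpre : cwB n i <+: A j := S.prefix_of_mem hx1 hx2 hl
      exact hc ⟨i, hi, S.cyl_anti hpre⟩
    · exact S.cyl_anti (S.prefix_of_mem hx2 hx1 hl)
  have hwj_pre : ∀ j, S.cyl (A j) ⊆ S.cyl (wj j) := by
    intro j
    rw [hwjdef]
    exact S.cyl_anti (List.take_prefix _ _)
  have hwj_ne : ∀ j, 2 ≤ v j → wj j ≠ [] := by
    intro j h2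
    obtain ⟨n, hn⟩ := Filter.nonempty_of_mem (hv j)
    have hn' : typ n j = v j := hn
    have hsp := hextS n j (by omega)
    rw [hn'] at hsp
    apply List.ne_nil_of_length_pos
    rw [hwjdef]
    simp only [List.length_take]
    omega
  set fo : ℕ → Prop := fun j => ∀ j', j' ∈ J → 2 ≤ v j' → wj j' = wj j → j ≤ j'
    with hfo
  set wt : ℕ → ℝ≥0∞ := fun j =>
    if j ∈ J then
      (if 2 ≤ v j then (if fo j then S.cost t (wj j) else 0)
       else if v j = 1 then S.cost t (A j)
       else S.Minf t (S.cyl (A j)))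
    else 0
    with hwt
  have hsum_le : ∀ P : Finset ℕ, ∑ j ∈ P, wt j ≤ c := by
    intro P
    have hPfilter : ∑ j ∈ P.filter (· ∈ J), wt j = ∑ j ∈ P, wt j := by
      refine Finset.sum_filter_of_ne fun j _ hj => ?_
      by_contra hjJ
      exact hj (by rw [hwt]; simp only [if_neg hjJ])
    rw [← hPfilter]
    set P' := P.filter (· ∈ J) with hP'def
    have hjJ : ∀ j ∈ P', j ∈ J := fun j hj => (Finset.mem_filter.mp hj).2
    have hNmem : (⋂ j ∈ P', ({n | typ n j = v j} ∩ Set.Ioi j)) ∈ U := by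
      refine (Filter.biInter_finset_mem _).mpr fun j _ => ?_
      exact Filter.inter_mem (hv j) (hatTop _ (Filter.Ioi_mem_atTop j))
    obtain ⟨n, hnmem⟩ := Filter.nonempty_of_mem hNmem
    have hPn : ∀ j ∈ P', typ n j = v j ∧ j < n := by
      intro j hj
      have hm := Set.mem_iInter₂.mp hnmem j hj
      exact ⟨hm.1, hm.2⟩
    set iS : ℕ → ℕ := fun j =>
      if hx : ∃ i ∈ sB n, cwB n i = wj j then hx.choose else 0 with hiSdef
    have hiS : ∀ j, (∃ i ∈ sB n, cwB n i = wj j) →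
        iS j ∈ sB n ∧ cwB n (iS j) = wj j := by
      intro j hx
      rw [hiSdef]
      simp only [dif_pos hx]
      exact ⟨hx.choose_spec.1, hx.choose_spec.2⟩
    set iD : ℕ → ℕ := fun j =>
      if hx : ∃ i ∈ sB n, S.cyl (cwB n i) = S.cyl (A j) then hx.choose else 0
      with hiDdef
    have hiD : ∀ j, (∃ i ∈ sB n, S.cyl (cwB n i) = S.cyl (A j)) →
        iD j ∈ sB n ∧ S.cyl (cwB n (iD j)) = S.cyl (A j) := by
      intro j hx
      rw [hiDdef]
      simp only [dif_pos hx]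
      exact ⟨hx.choose_spec.1, hx.choose_spec.2⟩
    set I0 : ℕ → Finset ℕ := fun j => (sB n).filter
      (fun i => (S.cyl (cwB n i) ∩ S.cyl (A j)).Nonempty ∧
        S.cyl (cwB n i) ⊆ S.cyl (A j)) with hI0
    have hfactS : ∀ j ∈ P', 2 ≤ v j → iS j ∈ sB n ∧ cwB n (iS j) = wj j := by
      intro j hj h2
      have htv := (hPn j hj).1
      obtain ⟨_, _, i, hi, hieq⟩ := hextS n j (by omega)
      refine hiS j ⟨i, hi, ?_⟩
      rw [hieq, htv, hwjdef]
    have hfactD : ∀ j ∈ P', v j = 1 → iD j ∈ sB n ∧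
        S.cyl (cwB n (iD j)) = S.cyl (A j) := by
      intro j hj h1
      have htv := (hPn j hj).1
      obtain ⟨hs, i, hi, hsub⟩ := hextD n j (by omega)
      exact hiD j ⟨i, hi, hnotshort n j (hjJ j hj) hs i hi hsub⟩
    have hfact0 : ∀ j ∈ P', v j = 0 →
        S.cyl (A j) ⊆ ⋃ i ∈ I0 j, S.cyl (cwB n i) := by
      intro j hj h0
      have htv := (hPn j hj).1
      obtain ⟨hs, hc⟩ := hext0 n j (by omega)
      intro z hz
      have hzE : z ∈ ⋃ j' ∈ J ∩ Set.Iio n, S.cyl (A j') :=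
        Set.mem_iUnion₂.mpr ⟨j, ⟨hjJ j hj, (hPn j hj).2⟩, hz⟩
      obtain ⟨i, hi, hzi⟩ := Set.mem_iUnion₂.mp (hcover n hzE)
      refine Set.mem_iUnion₂.mpr ⟨i, ?_, hzi⟩
      rw [hI0]
      exact Finset.mem_filter.mpr ⟨hi, ⟨z, hzi, hz⟩,
        hnocontain n j (hjJ j hj) hc i hi ⟨z, hzi, hz⟩⟩
    have hsplit : ∑ j ∈ P', wt j ≤
        (∑ j ∈ P'.filter (fun j => 2 ≤ v j ∧ fo j), wt j) +
        (∑ j ∈ P'.filter (fun j => v j = 1), wt j) +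
        (∑ j ∈ P'.filter (fun j => v j = 0), wt j) := by
      have e1 : ∑ j ∈ P', wt j =
          (∑ j ∈ P'.filter (fun j => 2 ≤ v j), wt j) +
          ∑ j ∈ P'.filter (fun j => ¬ 2 ≤ v j), wt j :=
        (Finset.sum_filter_add_sum_filter_not P' _ wt).symm
      have e2 : ∑ j ∈ P'.filter (fun j => 2 ≤ v j), wt j =
          (∑ j ∈ (P'.filter (fun j => 2 ≤ v j)).filter (fun j => fo j), wt j) +
          ∑ j ∈ (P'.filter (fun j => 2 ≤ v j)).filter (fun j => ¬ fo j), wt j :=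
        (Finset.sum_filter_add_sum_filter_not _ _ wt).symm
      have e3 : ∑ j ∈ (P'.filter (fun j => 2 ≤ v j)).filter (fun j => ¬ fo j), wt j
          = 0 := by
        refine Finset.sum_eq_zero fun j hj => ?_
        obtain ⟨hj1, hnfo⟩ := Finset.mem_filter.mp hj
        obtain ⟨hj2, h2v⟩ := Finset.mem_filter.mp hj1
        rw [hwt]
        simp only [if_pos (hjJ j hj2), if_pos h2v, if_neg hnfo]
      have e4 : ∑ j ∈ P'.filter (fun j => ¬ 2 ≤ v j), wt j =
          (∑ j ∈ (P'.filter (fun j => ¬ 2 ≤ v j)).filter (fun j => v j = 1), wt j) +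
          ∑ j ∈ (P'.filter (fun j => ¬ 2 ≤ v j)).filter (fun j => ¬ v j = 1), wt j :=
        (Finset.sum_filter_add_sum_filter_not _ _ wt).symm
      have s1 : (P'.filter (fun j => 2 ≤ v j)).filter (fun j => fo j) ⊆
          P'.filter (fun j => 2 ≤ v j ∧ fo j) := by
        intro j hj
        obtain ⟨hj1, hfoj⟩ := Finset.mem_filter.mp hj
        obtain ⟨hj2, h2v⟩ := Finset.mem_filter.mp hj1
        exact Finset.mem_filter.mpr ⟨hj2, h2v, hfoj⟩
      have s2 : (P'.filter (fun j => ¬ 2 ≤ v j)).filter (fun j => v j = 1) ⊆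
          P'.filter (fun j => v j = 1) := by
        intro j hj
        obtain ⟨hj1, hv1⟩ := Finset.mem_filter.mp hj
        exact Finset.mem_filter.mpr ⟨(Finset.mem_filter.mp hj1).1, hv1⟩
      have s3 : (P'.filter (fun j => ¬ 2 ≤ v j)).filter (fun j => ¬ v j = 1) ⊆
          P'.filter (fun j => v j = 0) := by
        intro j hj
        obtain ⟨hj1, hv1⟩ := Finset.mem_filter.mp hj
        obtain ⟨hj2, h2v⟩ := Finset.mem_filter.mp hj1
        exact Finset.mem_filter.mpr ⟨hj2, by omega⟩
      rw [e1, e2, e3, e4, add_zero]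
      exact le_trans (add_le_add (Finset.sum_le_sum_of_subset s1)
        (add_le_add (Finset.sum_le_sum_of_subset s2)
          (Finset.sum_le_sum_of_subset s3)))
        (le_of_eq (add_assoc _ _ _).symm)
    refine le_trans hsplit ?_
    set PS := P'.filter (fun j => 2 ≤ v j ∧ fo j) with hPSdef
    set PD := P'.filter (fun j => v j = 1) with hPDdef
    set P0 := P'.filter (fun j => v j = 0) with hP0def
    have hPSmem : ∀ j ∈ PS, j ∈ P' ∧ 2 ≤ v j ∧ fo j := fun j hj => by
      have hm := Finset.mem_filter.mp hj
      exact ⟨hm.1, hm.2.1, hm.2.2⟩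
    have hPDmem : ∀ j ∈ PD, j ∈ P' ∧ v j = 1 := fun j hj => Finset.mem_filter.mp hj
    have hP0mem : ∀ j ∈ P0, j ∈ P' ∧ v j = 0 := fun j hj => Finset.mem_filter.mp hj
    have eS : ∑ j ∈ PS, wt j = ∑ i ∈ PS.image iS, S.cost t (cwB n i) := by
      rw [Finset.sum_image ?_]
      · refine Finset.sum_congr rfl fun j hj => ?_
        obtain ⟨hj1, h2v, hfoj⟩ := hPSmem j hj
        rw [hwt]
        simp only [if_pos (hjJ j hj1), if_pos h2v, if_pos hfoj]
        rw [(hfactS j hj1 h2v).2]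
      · intro j1 hj1 j2 hj2 hEq
        obtain ⟨ha1, hb1, hc1⟩ := hPSmem j1 hj1
        obtain ⟨ha2, hb2, hc2⟩ := hPSmem j2 hj2
        have e1 : wj j1 = wj j2 := by
          rw [← (hfactS j1 ha1 hb1).2, ← (hfactS j2 ha2 hb2).2, hEq]
        exact le_antisymm (hc1 j2 (hjJ j2 ha2) hb2 e1.symm)
          (hc2 j1 (hjJ j1 ha1) hb1 e1)
    have eD : ∑ j ∈ PD, wt j = ∑ i ∈ PD.image iD, S.cost t (cwB n i) := by
      rw [Finset.sum_image ?_]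
      · refine Finset.sum_congr rfl fun j hj => ?_
        obtain ⟨hj1, hv1⟩ := hPDmem j hj
        rw [hwt]
        simp only [if_pos (hjJ j hj1), if_neg (by omega : ¬ 2 ≤ v j), if_pos hv1]
        exact S.cost_congr t ((hfactD j hj1 hv1).2).symm
      · intro j1 hj1 j2 hj2 hEq
        obtain ⟨ha1, hb1⟩ := hPDmem j1 hj1
        obtain ⟨ha2, hb2⟩ := hPDmem j2 hj2
        by_contra hne12
        have e1 : S.cyl (A j1) = S.cyl (A j2) := by
          rw [← (hfactD j1 ha1 hb1).2, ← (hfactD j2 ha2 hb2).2, hEq]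
        obtain ⟨x, hx⟩ := (hA j1 (hjJ j1 ha1)).2
        exact Set.disjoint_left.mp
          (hdisj j1 (hjJ j1 ha1) j2 (hjJ j2 ha2) hne12) hx (e1 ▸ hx)
    have e0 : ∑ j ∈ P0, wt j ≤ ∑ j ∈ P0, ∑ i ∈ I0 j, S.cost t (cwB n i) := by
      refine Finset.sum_le_sum fun j hj => ?_
      obtain ⟨hj1, hv0⟩ := hP0mem j hj
      rw [hwt]
      simp only [if_pos (hjJ j hj1), if_neg (by omega : ¬ 2 ≤ v j),
        if_neg (by omega : ¬ v j = 1)]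
      refine S.Minf_le_finsum_idx ht ?_ (hfact0 j hj1 hv0)
      intro i hi
      rw [hI0] at hi
      exact hne n i (Finset.mem_filter.mp hi).1
    have e0' : ∑ j ∈ P0, ∑ i ∈ I0 j, S.cost t (cwB n i) =
        ∑ i ∈ P0.biUnion I0, S.cost t (cwB n i) := by
      refine (Finset.sum_biUnion ?_).symm
      intro j1 hj1 j2 hj2 hne12
      have hj1' := hP0mem j1 (Finset.mem_coe.mp hj1)
      have hj2' := hP0mem j2 (Finset.mem_coe.mp hj2)
      refine Finset.disjoint_left.mpr fun i hi1 hi2 => ?_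
      rw [hI0] at hi1 hi2
      obtain ⟨hia, ⟨x, hxa, hxb⟩, hic⟩ := Finset.mem_filter.mp hi1
      obtain ⟨hia2, hib2, hic2⟩ := Finset.mem_filter.mp hi2
      exact Set.disjoint_left.mp
        (hdisj j1 (hjJ j1 hj1'.1) j2 (hjJ j2 hj2'.1) hne12) (hic hxa) (hic2 hxa)
    have hTS : PS.image iS ⊆ sB n := by
      intro i hi
      obtain ⟨j, hj, rfl⟩ := Finset.mem_image.mp hi
      obtain ⟨hj1, h2v, _⟩ := hPSmem j hj
      exact (hfactS j hj1 h2v).1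
    have hTD : PD.image iD ⊆ sB n := by
      intro i hi
      obtain ⟨j, hj, rfl⟩ := Finset.mem_image.mp hi
      obtain ⟨hj1, hv1⟩ := hPDmem j hj
      exact (hfactD j hj1 hv1).1
    have hT0 : P0.biUnion I0 ⊆ sB n := by
      intro i hi
      obtain ⟨j, hj, hij⟩ := Finset.mem_biUnion.mp hi
      rw [hI0] at hij
      exact (Finset.mem_filter.mp hij).1
    have hd1 : Disjoint (PS.image iS) (PD.image iD) := by
      refine Finset.disjoint_left.mpr fun i hi1 hi2 => ?_
      obtain ⟨j1, hj1, he1⟩ := Finset.mem_image.mp hi1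
      obtain ⟨j2, hj2, he2⟩ := Finset.mem_image.mp hi2
      obtain ⟨ha1, hb1, _⟩ := hPSmem j1 hj1
      obtain ⟨ha2, hb2⟩ := hPDmem j2 hj2
      have e1 : cwB n i = wj j1 := by rw [← he1]; exact (hfactS j1 ha1 hb1).2
      have e2 : S.cyl (cwB n i) = S.cyl (A j2) := by
        rw [← he2]; exact (hfactD j2 ha2 hb2).2
      have hsub : S.cyl (A j1) ⊆ S.cyl (A j2) := by
        rw [← e2, e1]; exact hwj_pre j1
      obtain ⟨x, hx⟩ := (hA j1 (hjJ j1 ha1)).2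
      by_cases hj12 : j1 = j2
      · subst hj12; omega
      · exact Set.disjoint_left.mp
          (hdisj j1 (hjJ j1 ha1) j2 (hjJ j2 ha2) hj12) hx (hsub hx)
    have hd2 : Disjoint (PS.image iS) (P0.biUnion I0) := by
      refine Finset.disjoint_left.mpr fun i hi1 hi2 => ?_
      obtain ⟨j1, hj1, he1⟩ := Finset.mem_image.mp hi1
      obtain ⟨j2, hj2, hij2⟩ := Finset.mem_biUnion.mp hi2
      obtain ⟨ha1, hb1, _⟩ := hPSmem j1 hj1
      obtain ⟨ha2, hb2⟩ := hP0mem j2 hj2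
      rw [hI0] at hij2
      obtain ⟨hia, hib, hic⟩ := Finset.mem_filter.mp hij2
      have e1 : cwB n i = wj j1 := by rw [← he1]; exact (hfactS j1 ha1 hb1).2
      have hsub : S.cyl (A j1) ⊆ S.cyl (A j2) := by
        refine Set.Subset.trans ?_ hic
        rw [e1]; exact hwj_pre j1
      obtain ⟨x, hx⟩ := (hA j1 (hjJ j1 ha1)).2
      by_cases hj12 : j1 = j2
      · subst hj12; omega
      · exact Set.disjoint_left.mp
          (hdisj j1 (hjJ j1 ha1) j2 (hjJ j2 ha2) hj12) hx (hsub hx)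
    have hd3 : Disjoint (PD.image iD) (P0.biUnion I0) := by
      refine Finset.disjoint_left.mpr fun i hi1 hi2 => ?_
      obtain ⟨j1, hj1, he1⟩ := Finset.mem_image.mp hi1
      obtain ⟨j2, hj2, hij2⟩ := Finset.mem_biUnion.mp hi2
      obtain ⟨ha1, hb1⟩ := hPDmem j1 hj1
      obtain ⟨ha2, hb2⟩ := hP0mem j2 hj2
      rw [hI0] at hij2
      obtain ⟨hia, hib, hic⟩ := Finset.mem_filter.mp hij2
      have e2 : S.cyl (cwB n i) = S.cyl (A j1) := by
        rw [← he1]; exact (hfactD j1 ha1 hb1).2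
      have hsub : S.cyl (A j1) ⊆ S.cyl (A j2) := by
        rw [← e2]; exact hic
      obtain ⟨x, hx⟩ := (hA j1 (hjJ j1 ha1)).2
      by_cases hj12 : j1 = j2
      · subst hj12; omega
      · exact Set.disjoint_left.mp
          (hdisj j1 (hjJ j1 ha1) j2 (hjJ j2 ha2) hj12) hx (hsub hx)
    calc (∑ j ∈ PS, wt j) + (∑ j ∈ PD, wt j) + ∑ j ∈ P0, wt j
        ≤ (∑ i ∈ PS.image iS, S.cost t (cwB n i)) +
          (∑ i ∈ PD.image iD, S.cost t (cwB n i)) +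
          ∑ i ∈ P0.biUnion I0, S.cost t (cwB n i) := by
          rw [eS, eD]
          exact add_le_add le_rfl (e0.trans_eq e0')
      _ = ∑ i ∈ (PS.image iS ∪ PD.image iD) ∪ P0.biUnion I0,
            S.cost t (cwB n i) := by
          rw [Finset.sum_union (Finset.disjoint_union_left.mpr ⟨hd2, hd3⟩),
            Finset.sum_union hd1]
      _ ≤ ∑ i ∈ sB n, S.cost t (cwB n i) := by
          refine Finset.sum_le_sum_of_subset ?_
          intro i hi
          rcases Finset.mem_union.mp hi with hi' | hi'
          · rcases Finset.mem_union.mp hi' with hi'' | hi''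
            · exact hTS hi''
            · exact hTD hi''
          · exact hT0 hi'
      _ ≤ c := (hsum n).le
  set G : ℕ → Set S.SigmaA := fun j =>
    if j ∈ J then
      (if 2 ≤ v j then (if fo j then S.cyl (wj j) else ∅)
       else S.cyl (A j))
    else ∅
    with hG
  have hGb : ∀ j, S.Minf t (G j) ≤ wt j := by
    intro j
    rw [hG, hwt]
    by_cases hjJ' : j ∈ J
    · simp only [if_pos hjJ']
      by_cases h2v : 2 ≤ v j
      · simp only [if_pos h2v]
        by_cases hfoj : fo j
        · simp only [if_pos hfoj]
          exact S.Minf_cyl_le_cost ht (hwj_ne j h2v)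
        · simp only [if_neg hfoj]
          exact le_of_eq (S.Minf_empty ht)
      · simp only [if_neg h2v]
        by_cases hv1 : v j = 1
        · simp only [if_pos hv1]
          exact S.Minf_cyl_le_cost ht (hA j hjJ').1
        · simp only [if_neg hv1]
          exact le_rfl
    · simp only [if_neg hjJ']
      exact le_of_eq (S.Minf_empty ht)
  have hcov2 : (⋃ j ∈ J, S.cyl (A j)) ⊆ ⋃ j, G j := by
    intro x hx
    obtain ⟨j, hjJ', hxj⟩ := Set.mem_iUnion₂.mp hx
    by_cases h2v : 2 ≤ v j
    · have hex : ∃ j', j' ∈ J ∧ 2 ≤ v j' ∧ wj j' = wj j := ⟨j, hjJ', h2v, rfl⟩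
      obtain ⟨hj0J, hj02, hj0w⟩ := Nat.find_spec hex
      have hfoj0 : fo (Nat.find hex) := by
        intro j'' h1 h2 h3
        exact Nat.find_min' hex ⟨h1, h2, h3.trans hj0w⟩
      refine Set.mem_iUnion.mpr ⟨Nat.find hex, ?_⟩
      rw [hG]
      simp only [if_pos hj0J, if_pos hj02, if_pos hfoj0]
      rw [hj0w]
      exact hwj_pre j hxj
    · refine Set.mem_iUnion.mpr ⟨j, ?_⟩
      rw [hG]
      simp only [if_pos hjJ', if_neg h2v]
      exact hxj
  calc S.Minf t (⋃ j ∈ J, S.cyl (A j)) ≤ ∑' j, S.Minf t (G j) :=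
        S.Minf_le_tsum ht hcov2
    _ ≤ ∑' j, wt j := ENNReal.tsum_le_tsum hGb
    _ ≤ c := by
        rw [ENNReal.tsum_eq_iSup_sum]
        exact iSup_le hsum_le

/-- increasing sets lemma, packaged: the `Minf` of an open set is approximated
by finite unions of the pieces of a decomposition. -/
lemma ISL' {t : ℝ} (ht : 0 < t) (A : ℕ → Wd q) (J : Set ℕ)
    (hA : ∀ j ∈ J, A j ≠ [] ∧ (S.cyl (A j)).Nonempty)
    (hdisj : ∀ j ∈ J, ∀ j' ∈ J, j ≠ j' → Disjoint (S.cyl (A j)) (S.cyl (A j')))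
    {c : ℝ≥0∞}
    (hn : ∀ n : ℕ, S.Minf t (⋃ j ∈ J ∩ Set.Iio n, S.cyl (A j)) < c) :
    S.Minf t (⋃ j ∈ J, S.cyl (A j)) ≤ c := by
  refine S.ISL ht A J hA hdisj c fun n => ?_
  have hcpt : IsCompact (⋃ j ∈ J ∩ Set.Iio n, S.cyl (A j)) := by
    refine Set.Finite.isCompact_biUnion ?_ ?_
    · exact (Set.finite_Iio n).subset Set.inter_subset_right
    · intro j _
      exact (S.isClosed_cyl _).isCompact
  obtain ⟨s, cw, h1, h2, h3⟩ := S.finite_cover_of_Minf_lt hcpt (hn n)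
  exact ⟨s, cw, h1, h2, h3⟩

/-! ### the per-cylinder step lemma -/

lemma step_per_cyl {t : ℝ} (ht : 0 < t) {u : Wd q} (hu : u ≠ [])
    (hune : (S.cyl u).Nonempty) {O : Set S.SigmaA} (hO : IsOpen O)
    (hfull : S.Minf t (O ∩ S.cyl u) = S.Minf t (S.cyl u)) {δ : ℝ≥0∞} (hδ : 0 < δ) :
    ∃ g : Finset (Wd q),
      (∀ w ∈ g, w ≠ [] ∧ (S.cyl w).Nonempty) ∧
      (∀ w ∈ g, ∀ w' ∈ g, w ≠ w' → Disjoint (S.cyl w) (S.cyl w')) ∧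
      (⋃ w ∈ g, S.cyl w) ⊆ O ∩ S.cyl u ∧
      ∀ B : Finset (Wd q), ((⋃ w ∈ g, S.cyl w) ⊆ ⋃ w ∈ B, S.cyl w) →
        S.Minf t (S.cyl u) ≤ (∑ w ∈ B, S.Minf t (S.cyl w)) + δ := by
  have hOpen : IsOpen (O ∩ S.cyl u) := hO.inter (S.isOpen_cyl u)
  obtain ⟨A, J, hAp, hdisjp, hdecomp⟩ := S.open_decomp hOpen
  have hAp1 : ∀ j ∈ J, A j ≠ [] ∧ (S.cyl (A j)).Nonempty := fun j hj =>
    ⟨(hAp j hj).1, (hAp j hj).2.1⟩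
  have hsup : ∃ n : ℕ, S.Minf t (S.cyl u) ≤
      S.Minf t (⋃ j ∈ J ∩ Set.Iio n, S.cyl (A j)) + δ := by
    by_contra hcon
    push_neg at hcon
    by_cases hc0 : S.Minf t (S.cyl u) = 0
    · have h0 := hcon 0
      rw [hc0] at h0
      exact absurd h0 (by simp)
    · have hlt : ∀ n, S.Minf t (⋃ j ∈ J ∩ Set.Iio n, S.cyl (A j)) <
          S.Minf t (S.cyl u) - δ := by
        intro n
        exact lt_tsub_iff_right.mpr (hcon n)
      have hISL := S.ISL' ht A J hAp1 hdisjp hlt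
      rw [← hdecomp, hfull] at hISL
      exact absurd hISL (not_le.mpr (ENNReal.sub_lt_self
        (S.Minf_lt_top ht _).ne hc0 hδ.ne'))
  obtain ⟨n, hn⟩ := hsup
  have hfin : (J ∩ Set.Iio n).Finite := (Set.finite_Iio n).subset Set.inter_subset_right
  refine ⟨hfin.toFinset.image A, ?_, ?_, ?_, ?_⟩
  · intro w hw
    obtain ⟨j, hj, rfl⟩ := Finset.mem_image.mp hw
    have hj' := (hfin.mem_toFinset.mp hj).1
    exact ⟨(hAp j hj').1, (hAp j hj').2.1⟩
  · intro w hw w' hw' hww'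
    obtain ⟨j, hj, rfl⟩ := Finset.mem_image.mp hw
    obtain ⟨j', hj', rfl⟩ := Finset.mem_image.mp hw'
    have hj1 := (hfin.mem_toFinset.mp hj).1
    have hj1' := (hfin.mem_toFinset.mp hj').1
    have hjj' : j ≠ j' := fun h => hww' (by rw [h])
    exact hdisjp j hj1 j' hj1' hjj'
  · intro x hx
    obtain ⟨w, hw, hxw⟩ := Set.mem_iUnion₂.mp hx
    obtain ⟨j, hj, rfl⟩ := Finset.mem_image.mp hw
    exact (hAp j (hfin.mem_toFinset.mp hj).1).2.2 hxw
  · intro B hB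
    have hEq : (⋃ w ∈ hfin.toFinset.image A, S.cyl w) =
        ⋃ j ∈ J ∩ Set.Iio n, S.cyl (A j) := by
      ext z
      constructor
      · intro hz
        obtain ⟨w, hw, hzw⟩ := Set.mem_iUnion₂.mp hz
        obtain ⟨j, hj, rfl⟩ := Finset.mem_image.mp hw
        exact Set.mem_iUnion₂.mpr ⟨j, hfin.mem_toFinset.mp hj, hzw⟩
      · intro hz
        obtain ⟨j, hj, hzj⟩ := Set.mem_iUnion₂.mp hz
        exact Set.mem_iUnion₂.mpr ⟨A j,
          Finset.mem_image_of_mem A (hfin.mem_toFinset.mpr hj), hzj⟩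
    have h2 : S.Minf t (⋃ j ∈ J ∩ Set.Iio n, S.cyl (A j)) ≤
        ∑ w ∈ B, S.Minf t (S.cyl w) := by
      refine S.Minf_le_finsum ht ?_
      rw [← hEq]
      exact hB
    calc S.Minf t (S.cyl u)
        ≤ S.Minf t (⋃ j ∈ J ∩ Set.Iio n, S.cyl (A j)) + δ := hn
      _ ≤ (∑ w ∈ B, S.Minf t (S.cyl w)) + δ := add_le_add h2 le_rfl

end GDMS

namespace GDMS

variable (S : GDMS q N)

/-- The main construction: the content of a finite disjoint union of nonempty
cylinders is preserved under intersecting with `⋂ i, F i`. -/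
lemma key_ge {t : ℝ} (ht : 0 < t) (F : ℕ → Set S.SigmaA)
    (hgδ : ∀ i, IsGδ (F i))
    (hfc : ∀ i, ∀ w : Wd q, w ≠ [] → S.Minf t (F i ∩ S.cyl w) = S.Minf t (S.cyl w))
    (fam0 : Finset (Wd q)) (hfam0 : ∀ w ∈ fam0, w ≠ [] ∧ (S.cyl w).Nonempty)
    (hdisj0 : ∀ w ∈ fam0, ∀ w' ∈ fam0, w ≠ w' → Disjoint (S.cyl w) (S.cyl w')) :
    S.Minf t (⋃ w ∈ fam0, S.cyl w) ≤ S.Minf t ((⋂ i, F i) ∩ ⋃ w ∈ fam0, S.cyl w) := by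
  have hgseq : ∀ i, ∃ V : ℕ → Set S.SigmaA, (∀ k, IsOpen (V k)) ∧ F i = ⋂ k, V k := by
    intro i
    obtain ⟨T, hT1, hT2, hT3⟩ := hgδ i
    rcases T.eq_empty_or_nonempty with hTe | hTne
    · refine ⟨fun _ => Set.univ, fun _ => isOpen_univ, ?_⟩
      rw [hT3, hTe]
      simp
    · obtain ⟨f, hf⟩ := hT2.exists_eq_range hTne
      refine ⟨f, fun k => hT1 _ (by rw [hf]; exact Set.mem_range_self k), ?_⟩
      rw [hT3, hf, Set.sInter_range]
  choose V hVopen hVeq using hgseq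
  let e : ℕ ≃ ℕ × ℕ := (Denumerable.eqv (ℕ × ℕ)).symm
  set O : ℕ → Set S.SigmaA := fun m => V (e m).1 (e m).2 with hOdef
  have hOopen : ∀ m, IsOpen (O m) := fun m => hVopen _ _
  have hOint : ∀ x : S.SigmaA, (∀ m, x ∈ O m) → ∀ i, x ∈ F i := by
    intro x hx i
    rw [hVeq i]
    refine Set.mem_iInter.mpr fun k => ?_
    have h1 := hx (e.symm (i, k))
    rw [hOdef] at h1
    simpa using h1
  have hOfull : ∀ m (w : Wd q), w ≠ [] →
      S.Minf t (O m ∩ S.cyl w) = S.Minf t (S.cyl w) := by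
    intro m w hw
    refine le_antisymm (S.Minf_mono Set.inter_subset_right) ?_
    rw [← hfc (e m).1 w hw]
    refine S.Minf_mono (Set.inter_subset_inter_left _ ?_)
    rw [hOdef, hVeq (e m).1]
    exact Set.iInter_subset _ _
  set UN : Finset (Wd q) → Set S.SigmaA := fun fam => ⋃ w ∈ fam, S.cyl w with hUNdef
  set R := S.Minf t (UN fam0) with hRdef
  refine ENNReal.le_of_forall_pos_le_add fun ε0 hε0 _ => ?_
  set ε : ℝ≥0∞ := (ε0 : ℝ≥0∞) / 2 with hεdef
  have hεpos : 0 < ε := ENNReal.div_pos (by exact_mod_cast hε0.ne') (by norm_num)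
  set err : ℕ → ℝ≥0∞ := fun m => ε * ∑ j ∈ Finset.range m, (2⁻¹ : ℝ≥0∞) ^ (j+1)
    with herrdef
  have hgeom : (∑' k : ℕ, (2⁻¹ : ℝ≥0∞) ^ (k+1)) = 1 := by
    have h1 : ∀ k : ℕ, (2⁻¹ : ℝ≥0∞) ^ (k+1) = 2⁻¹ * (2⁻¹) ^ k := fun k => by
      rw [pow_succ]; ring
    rw [tsum_congr h1, ENNReal.tsum_mul_left, ENNReal.tsum_geometric,
      ENNReal.one_sub_inv_two, inv_inv]
    exact ENNReal.inv_mul_cancel (by norm_num) (by norm_num)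
  have herr_le : ∀ m, err m ≤ ε := by
    intro m
    rw [herrdef]
    calc ε * ∑ j ∈ Finset.range m, (2⁻¹ : ℝ≥0∞) ^ (j+1)
        ≤ ε * ∑' j : ℕ, (2⁻¹ : ℝ≥0∞) ^ (j+1) :=
          mul_le_mul_right (Summable.sum_le_tsum _ (fun _ _ => zero_le) ENNReal.summable) ε
      _ = ε := by rw [hgeom, mul_one]
  have herr_succ : ∀ m, err m + ε * (2⁻¹:ℝ≥0∞) ^ (m+1) = err (m+1) := by
    intro m
    rw [herrdef]
    simp only []
    rw [Finset.sum_range_succ, mul_add]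
  let T : ℕ → Type _ := fun m => {fam : Finset (Wd q) //
    (∀ w ∈ fam, w ≠ [] ∧ (S.cyl w).Nonempty) ∧
    (∀ w ∈ fam, ∀ w' ∈ fam, w ≠ w' → Disjoint (S.cyl w) (S.cyl w')) ∧
    (∀ B : Finset (Wd q), UN fam ⊆ ⋃ w ∈ B, S.cyl w →
      R ≤ (∑ w ∈ B, S.Minf t (S.cyl w)) + err m)}
  have hbase : (∀ w ∈ fam0, w ≠ [] ∧ (S.cyl w).Nonempty) ∧
      (∀ w ∈ fam0, ∀ w' ∈ fam0, w ≠ w' → Disjoint (S.cyl w) (S.cyl w')) ∧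
      (∀ B : Finset (Wd q), UN fam0 ⊆ ⋃ w ∈ B, S.cyl w →
        R ≤ (∑ w ∈ B, S.Minf t (S.cyl w)) + err 0) := by
    refine ⟨hfam0, hdisj0, fun B hB => ?_⟩
    refine le_add_right ?_
    rw [hRdef]
    exact S.Minf_le_finsum ht hB
  have hstep : ∀ m (p : T m), ∃ p' : T (m+1), UN p'.1 ⊆ O m ∩ UN p.1 := by
    intro m p
    obtain ⟨fam, hBa, hBd, hBound⟩ := p
    show ∃ p' : T (m+1), UN p'.1 ⊆ O m ∩ UN fam
    set δu : Wd q → ℝ≥0∞ := fun u =>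
      ε * (2⁻¹:ℝ≥0∞) ^ (m+1) * (2⁻¹:ℝ≥0∞) ^ (Encodable.encode u + 1) with hδu
    have hδpos : ∀ u : Wd q, (0:ℝ≥0∞) < δu u := by
      intro u
      rw [hδu]
      exact ENNReal.mul_pos
        (ENNReal.mul_pos hεpos.ne' (pow_ne_zero _ (by norm_num))).ne'
        (pow_ne_zero _ (by norm_num))
    have hper : ∀ u, u ∈ fam → ∃ g : Finset (Wd q),
        (∀ w ∈ g, w ≠ [] ∧ (S.cyl w).Nonempty) ∧
        (∀ w ∈ g, ∀ w' ∈ g, w ≠ w' → Disjoint (S.cyl w) (S.cyl w')) ∧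
        (⋃ w ∈ g, S.cyl w) ⊆ O m ∩ S.cyl u ∧
        ∀ B : Finset (Wd q), ((⋃ w ∈ g, S.cyl w) ⊆ ⋃ w ∈ B, S.cyl w) →
          S.Minf t (S.cyl u) ≤ (∑ w ∈ B, S.Minf t (S.cyl w)) + δu u := by
      intro u hu
      exact S.step_per_cyl ht (hBa u hu).1 (hBa u hu).2 (hOopen m)
        (hOfull m u (hBa u hu).1) (hδpos u)
    choose g hg1 hg2 hg3 hg4 using hper
    refine ⟨⟨fam.attach.biUnion (fun u => g u.1 u.2), ?_, ?_, ?_⟩, ?_⟩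
    · intro w hw
      obtain ⟨u, _, hwu⟩ := Finset.mem_biUnion.mp hw
      exact hg1 u.1 u.2 w hwu
    · intro w hw w' hw' hww'
      obtain ⟨u, _, hwu⟩ := Finset.mem_biUnion.mp hw
      obtain ⟨u', _, hwu'⟩ := Finset.mem_biUnion.mp hw'
      by_cases huu : u = u'
      · subst huu
        exact hg2 u.1 u.2 w hwu w' hwu' hww'
      · have h1 : S.cyl w ⊆ S.cyl u.1 := by
          refine Set.Subset.trans ?_ ((hg3 u.1 u.2).trans Set.inter_subset_right)
          intro z hz
          exact Set.mem_iUnion₂.mpr ⟨w, hwu, hz⟩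
        have h2 : S.cyl w' ⊆ S.cyl u'.1 := by
          refine Set.Subset.trans ?_ ((hg3 u'.1 u'.2).trans Set.inter_subset_right)
          intro z hz
          exact Set.mem_iUnion₂.mpr ⟨w', hwu', hz⟩
        have hne_u : u.1 ≠ u'.1 := fun h => huu (Subtype.ext h)
        exact (hBd u.1 u.2 u'.1 u'.2 hne_u).mono h1 h2
    · -- the Bound at m+1
      intro B hB
      set Paid := fam.filter (fun u => ∃ b ∈ B, S.cyl u ⊆ S.cyl b) with hPaid
      set Unpaid := fam.filter (fun u => ¬ ∃ b ∈ B, S.cyl u ⊆ S.cyl b) with hUnpaid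
      set pay : Wd q → Wd q := fun u =>
        if h : ∃ b ∈ B, S.cyl u ⊆ S.cyl b then h.choose else [] with hpay
      have hpayspec : ∀ u, (∃ b ∈ B, S.cyl u ⊆ S.cyl b) →
          pay u ∈ B ∧ S.cyl u ⊆ S.cyl (pay u) := by
        intro u h
        rw [hpay]
        simp only [dif_pos h]
        exact ⟨h.choose_spec.1, h.choose_spec.2⟩
      have hcov' : UN fam ⊆ ⋃ w ∈ (Paid.image pay ∪ Unpaid), S.cyl w := by
        intro x hx
        rw [hUNdef] at hx
        obtain ⟨u, hu, hxu⟩ := Set.mem_iUnion₂.mp hx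
        by_cases hp : ∃ b ∈ B, S.cyl u ⊆ S.cyl b
        · refine Set.mem_iUnion₂.mpr ⟨pay u, ?_, (hpayspec u hp).2 hxu⟩
          exact Finset.mem_union_left _
            (Finset.mem_image_of_mem pay (Finset.mem_filter.mpr ⟨hu, hp⟩))
        · exact Set.mem_iUnion₂.mpr ⟨u,
            Finset.mem_union_right _ (Finset.mem_filter.mpr ⟨hu, hp⟩), hxu⟩
      have hmain := hBound (Paid.image pay ∪ Unpaid) hcov'
      set Bu : Wd q → Finset (Wd q) := fun u => B.filter
        (fun b => (S.cyl b ∩ S.cyl u).Nonempty ∧ S.cyl b ⊆ S.cyl u) with hBu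
      have hBucov : ∀ u (hu : u ∈ fam), (¬ ∃ b ∈ B, S.cyl u ⊆ S.cyl b) →
          (⋃ w ∈ g u hu, S.cyl w) ⊆ ⋃ b ∈ Bu u, S.cyl b := by
        intro u hu hnp z hz
        have hzB : z ∈ ⋃ w ∈ B, S.cyl w := by
          apply hB
          obtain ⟨w, hw, hzw⟩ := Set.mem_iUnion₂.mp hz
          exact Set.mem_iUnion₂.mpr ⟨w,
            Finset.mem_biUnion.mpr ⟨⟨u, hu⟩, Finset.mem_attach _ _, hw⟩, hzw⟩
        obtain ⟨b, hb, hzb⟩ := Set.mem_iUnion₂.mp hzB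
        have hzu : z ∈ S.cyl u := ((hg3 u hu).trans Set.inter_subset_right) hz
        rcases S.cyl_nested hzb hzu with hsub | hsub
        · exact Set.mem_iUnion₂.mpr ⟨b,
            Finset.mem_filter.mpr ⟨hb, ⟨z, hzb, hzu⟩, hsub⟩, hzb⟩
        · exact absurd ⟨b, hb, hsub⟩ hnp
      have hUnpaid_bound : ∀ u ∈ Unpaid,
          S.Minf t (S.cyl u) ≤ (∑ b ∈ Bu u, S.Minf t (S.cyl b)) + δu u := by
        intro u hu
        obtain ⟨hu1, hu2⟩ := Finset.mem_filter.mp hu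
        exact hg4 u hu1 (Bu u) (hBucov u hu1 hu2)
      have hBudisj : (↑Unpaid : Set (Wd q)).PairwiseDisjoint Bu := by
        intro u hu u' hu' huu'
        refine Finset.disjoint_left.mpr fun b hb hb' => ?_
        rw [hBu] at hb hb'
        obtain ⟨_, ⟨x, hx1, hx2⟩, hb2⟩ := Finset.mem_filter.mp hb
        obtain ⟨_, hb1', hb2'⟩ := Finset.mem_filter.mp hb'
        have hu1 := (Finset.mem_filter.mp (Finset.mem_coe.mp hu)).1
        have hu1' := (Finset.mem_filter.mp (Finset.mem_coe.mp hu')).1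
        exact Set.disjoint_left.mp (hBd u hu1 u' hu1' huu') (hb2 hx1) (hb2' hx1)
      have himgdisj : Disjoint (Paid.image pay) (Unpaid.biUnion Bu) := by
        refine Finset.disjoint_left.mpr fun b hb hb' => ?_
        obtain ⟨p, hp, hbp⟩ := Finset.mem_image.mp hb
        obtain ⟨u, hu, hbu⟩ := Finset.mem_biUnion.mp hb'
        obtain ⟨hp1, hp2⟩ := Finset.mem_filter.mp hp
        obtain ⟨hu1, hu2⟩ := Finset.mem_filter.mp hu
        rw [hBu] at hbu
        obtain ⟨hba, hbb, hbc⟩ := Finset.mem_filter.mp hbu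
        have h1 : S.cyl p ⊆ S.cyl u := by
          refine Set.Subset.trans ?_ hbc
          rw [← hbp]
          exact (hpayspec p hp2).2
        obtain ⟨x, hx⟩ := (hBa p hp1).2
        by_cases hpu : p = u
        · subst hpu
          exact hu2 hp2
        · exact Set.disjoint_left.mp (hBd p hp1 u hu1 hpu) hx (h1 hx)
      have hsubB : Paid.image pay ∪ Unpaid.biUnion Bu ⊆ B := by
        intro b hb
        rcases Finset.mem_union.mp hb with hb' | hb'
        · obtain ⟨p, hp, hbp⟩ := Finset.mem_image.mp hb'
          rw [← hbp]
          exact (hpayspec p (Finset.mem_filter.mp hp).2).1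
        · obtain ⟨u, hu, hbu⟩ := Finset.mem_biUnion.mp hb'
          rw [hBu] at hbu
          exact (Finset.mem_filter.mp hbu).1
      have hδsum : ∑ u ∈ Unpaid, δu u ≤ ε * (2⁻¹:ℝ≥0∞) ^ (m+1) := by
        have e1 : ∑ u ∈ Unpaid, δu u = ε * (2⁻¹:ℝ≥0∞) ^ (m+1) *
            ∑ u ∈ Unpaid, (2⁻¹:ℝ≥0∞) ^ (Encodable.encode u + 1) := by
          rw [hδu, ← Finset.mul_sum]
        rw [e1]
        calc ε * (2⁻¹:ℝ≥0∞) ^ (m+1) *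
            ∑ u ∈ Unpaid, (2⁻¹:ℝ≥0∞) ^ (Encodable.encode u + 1)
            ≤ ε * (2⁻¹:ℝ≥0∞) ^ (m+1) * 1 := by
              refine mul_le_mul_right ?_ _
              calc ∑ u ∈ Unpaid, (2⁻¹:ℝ≥0∞) ^ (Encodable.encode u + 1)
                  = ∑ k ∈ Unpaid.image Encodable.encode, (2⁻¹:ℝ≥0∞) ^ (k+1) := by
                    rw [Finset.sum_image
                      (fun a _ b _ h => Encodable.encode_injective h)]
                _ ≤ ∑' k : ℕ, (2⁻¹:ℝ≥0∞) ^ (k+1) :=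
                    Summable.sum_le_tsum _ (fun _ _ => zero_le) ENNReal.summable
                _ = 1 := hgeom
          _ = ε * (2⁻¹:ℝ≥0∞) ^ (m+1) := mul_one _
      calc R ≤ (∑ w ∈ Paid.image pay ∪ Unpaid, S.Minf t (S.cyl w)) + err m := hmain
        _ ≤ ((∑ w ∈ Paid.image pay, S.Minf t (S.cyl w)) +
              ∑ u ∈ Unpaid, S.Minf t (S.cyl u)) + err m :=
            add_le_add (sum_union_le' _ _ _) le_rfl
        _ ≤ ((∑ w ∈ Paid.image pay, S.Minf t (S.cyl w)) +
              ∑ u ∈ Unpaid, ((∑ b ∈ Bu u, S.Minf t (S.cyl b)) + δu u)) + err m := by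
            exact add_le_add (add_le_add le_rfl
              (Finset.sum_le_sum hUnpaid_bound)) le_rfl
        _ = ((∑ w ∈ Paid.image pay, S.Minf t (S.cyl w)) +
              ((∑ u ∈ Unpaid, ∑ b ∈ Bu u, S.Minf t (S.cyl b)) +
                ∑ u ∈ Unpaid, δu u)) + err m := by
            rw [Finset.sum_add_distrib]
        _ ≤ ((∑ w ∈ Paid.image pay, S.Minf t (S.cyl w)) +
              ((∑ b ∈ Unpaid.biUnion Bu, S.Minf t (S.cyl b)) +
                ε * (2⁻¹:ℝ≥0∞) ^ (m+1))) + err m := by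
            refine add_le_add (add_le_add le_rfl (add_le_add
              (le_of_eq (Finset.sum_biUnion hBudisj).symm) hδsum)) le_rfl
        _ = (((∑ w ∈ Paid.image pay, S.Minf t (S.cyl w)) +
              ∑ b ∈ Unpaid.biUnion Bu, S.Minf t (S.cyl b)) +
              ε * (2⁻¹:ℝ≥0∞) ^ (m+1)) + err m := by ring
        _ ≤ ((∑ w ∈ B, S.Minf t (S.cyl w)) + ε * (2⁻¹:ℝ≥0∞) ^ (m+1)) + err m := by
            refine add_le_add (add_le_add ?_ le_rfl) le_rfl
            calc (∑ w ∈ Paid.image pay, S.Minf t (S.cyl w)) +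
                ∑ b ∈ Unpaid.biUnion Bu, S.Minf t (S.cyl b)
                = ∑ w ∈ Paid.image pay ∪ Unpaid.biUnion Bu, S.Minf t (S.cyl w) :=
                  (Finset.sum_union himgdisj).symm
              _ ≤ ∑ w ∈ B, S.Minf t (S.cyl w) :=
                  Finset.sum_le_sum_of_subset hsubB
        _ = (∑ w ∈ B, S.Minf t (S.cyl w)) +
              (err m + ε * (2⁻¹:ℝ≥0∞) ^ (m+1)) := by ring
        _ = (∑ w ∈ B, S.Minf t (S.cyl w)) + err (m+1) :=
            congrArg _ (herr_succ m)
    · intro x hx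
      have hx' : x ∈ ⋃ w ∈ fam.attach.biUnion (fun u => g u.1 u.2), S.cyl w := hx
      obtain ⟨w, hw, hxw⟩ := Set.mem_iUnion₂.mp hx'
      obtain ⟨u, _, hwu⟩ := Finset.mem_biUnion.mp hw
      have h2 : x ∈ O m ∩ S.cyl u.1 :=
        (hg3 u.1 u.2) (Set.mem_iUnion₂.mpr ⟨w, hwu, hxw⟩)
      refine ⟨h2.1, ?_⟩
      show x ∈ ⋃ w ∈ fam, S.cyl w
      exact Set.mem_iUnion₂.mpr ⟨u.1, u.2, h2.2⟩
  obtain ⟨Gs, hGs0, hGsstep⟩ := dep_rec_choice (T := T)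
    ⟨fam0, hbase⟩ (fun m p p' => UN p'.1 ⊆ O m ∩ UN p.1) hstep
  set K := ⋂ m, UN (Gs m).1 with hKdef
  have hUNclosed : ∀ m, IsClosed (UN (Gs m).1) := by
    intro m
    show IsClosed (⋃ w ∈ (Gs m).1, S.cyl w)
    exact Set.Finite.isClosed_biUnion (Finset.finite_toSet _)
      (fun w _ => S.isClosed_cyl w)
  have hKmono : ∀ m, UN (Gs (m+1)).1 ⊆ UN (Gs m).1 := fun m =>
    (hGsstep m).trans Set.inter_subset_right
  have hKanti : Antitone (fun m => UN (Gs m).1) := antitone_nat_of_succ_le hKmono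
  have hKF : K ⊆ (⋂ i, F i) ∩ UN fam0 := by
    intro x hx
    have hxm : ∀ m, x ∈ UN (Gs m).1 := Set.mem_iInter.mp hx
    constructor
    · refine Set.mem_iInter.mpr fun i => ?_
      refine hOint x (fun m => ?_) i
      exact ((hGsstep m) (hxm (m+1))).1
    · have h0 := hxm 0
      rw [hGs0] at h0
      exact h0
  have hcovbound : ∀ (c : ℕ → Wd q), (∀ n, c n ≠ []) →
      ((⋂ i, F i) ∩ UN fam0 ⊆ ⋃ n, S.cyl (c n)) →
      R ≤ (∑' n, S.cost t (c n)) + ε := by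
    intro c hc1 hc2
    have hKcpt : IsCompact K := (isClosed_iInter hUNclosed).isCompact
    have hKcov : K ⊆ ⋃ n, S.cyl (c n) := Set.Subset.trans hKF hc2
    obtain ⟨s, hs⟩ := hKcpt.elim_finite_subcover (fun n => S.cyl (c n))
      (fun n => S.isOpen_cyl _) hKcov
    have hfind : ∃ m, UN (Gs m).1 ⊆ ⋃ i ∈ s, S.cyl (c i) := by
      by_contra hcon
      push_neg at hcon
      have hne' : ∀ m, (UN (Gs m).1 \ ⋃ i ∈ s, S.cyl (c i)).Nonempty := by
        intro m
        rcases Set.not_subset.mp (hcon m) with ⟨x, hx1, hx2⟩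
        exact ⟨x, hx1, hx2⟩
      have hclosed' : ∀ m, IsClosed (UN (Gs m).1 \ ⋃ i ∈ s, S.cyl (c i)) :=
        fun m => (hUNclosed m).sdiff (isOpen_biUnion fun i _ => S.isOpen_cyl _)
      have hanti' : Antitone (fun m => UN (Gs m).1 \ ⋃ i ∈ s, S.cyl (c i)) :=
        fun a b hab => Set.diff_subset_diff_left (hKanti hab)
      have hint := IsCompact.nonempty_iInter_of_directed_nonempty_isCompact_isClosed
        _ hanti'.directed_ge hne' (fun m => (hclosed' m).isCompact) hclosed'
      obtain ⟨x, hx⟩ := hint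
      have hx1 : x ∈ K := Set.mem_iInter.mpr fun m => (Set.mem_iInter.mp hx m).1
      exact (Set.mem_iInter.mp hx 0).2 (hs hx1)
    obtain ⟨m, hm⟩ := hfind
    have hcov2 : UN (Gs m).1 ⊆ ⋃ w ∈ s.image c, S.cyl w := by
      intro x hx
      obtain ⟨i, hi, hxi⟩ := Set.mem_iUnion₂.mp (hm hx)
      exact Set.mem_iUnion₂.mpr ⟨c i, Finset.mem_image_of_mem c hi, hxi⟩
    have hBnd := (Gs m).2.2.2 (s.image c) hcov2
    calc R ≤ (∑ w ∈ s.image c, S.Minf t (S.cyl w)) + err m := hBnd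
      _ ≤ (∑ i ∈ s, S.Minf t (S.cyl (c i))) + ε :=
          add_le_add (sum_image_le _ _ _) (herr_le m)
      _ ≤ (∑ i ∈ s, S.cost t (c i)) + ε :=
          add_le_add (Finset.sum_le_sum fun i _ => S.Minf_cyl_le_cost ht (hc1 i))
            le_rfl
      _ ≤ (∑' n, S.cost t (c n)) + ε :=
          add_le_add (Summable.sum_le_tsum _ (fun _ _ => zero_le) ENNReal.summable) le_rfl
  have hfin2 : S.Minf t ((⋂ i, F i) ∩ UN fam0) <
      S.Minf t ((⋂ i, F i) ∩ UN fam0) + ε :=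
    ENNReal.lt_add_right (S.Minf_lt_top ht _).ne hεpos.ne'
  obtain ⟨c, hc1, hc2, hc3⟩ := S.exists_cover_of_lt hfin2
  calc R ≤ (∑' n, S.cost t (c n)) + ε := hcovbound c hc1 hc2
    _ ≤ (S.Minf t ((⋂ i, F i) ∩ UN fam0) + ε) + ε := add_le_add hc3.le le_rfl
    _ = S.Minf t ((⋂ i, F i) ∩ UN fam0) + (ε + ε) := by ring
    _ = S.Minf t ((⋂ i, F i) ∩ UN fam0) + ε0 := by
        rw [hεdef, ENNReal.add_halves]

end GDMS

end Aux
end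
/-- For `0 < t ≤ dim_H Λ_A`, if `F_i ∈ 𝒢^t(Σ_A)` for all `i ∈ ℕ`,
then `M_∞^t((⋂ i, F_i) ∩ U) = M_∞^t(U)` for every open `U ⊆ Σ_A`; in particular
`⋂ i, F_i ∈ 𝒢^t(Σ_A)`. -/
theorem inter_of_memGSigma {q N : ℕ} (S : GDMS q N) (t : ℝ) (ht : 0 < t)
    (ht' : ENNReal.ofReal t ≤ dimH S.limitSet)
    (F : ℕ → Set S.SigmaA) (hF : ∀ i, S.memGSigma t (F i)) :
    (∀ U : Set S.SigmaA, IsOpen U → S.Minf t ((⋂ i, F i) ∩ U) = S.Minf t U) ∧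
    S.memGSigma t (⋂ i, F i) := by
  have hfc : ∀ i, ∀ w : Wd q, w ≠ [] →
      S.Minf t (F i ∩ S.cyl w) = S.Minf t (S.cyl w) := fun i w hw => (hF i).2 w hw
  have hgδ : ∀ i, IsGδ (F i) := fun i => (hF i).1
  have hopen : ∀ U : Set S.SigmaA, IsOpen U →
      S.Minf t ((⋂ i, F i) ∩ U) = S.Minf t U := by
    intro U hU
    refine le_antisymm (S.Minf_mono Set.inter_subset_right) ?_
    obtain ⟨A, J, hAp, hdisj, hdecomp⟩ := S.open_decomp hU
    have hA1 : ∀ j ∈ J, A j ≠ [] ∧ (S.cyl (A j)).Nonempty := fun j hj =>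
      ⟨(hAp j hj).1, (hAp j hj).2.1⟩
    have hpern : ∀ n : ℕ, S.Minf t (⋃ j ∈ J ∩ Set.Iio n, S.cyl (A j)) ≤
        S.Minf t ((⋂ i, F i) ∩ U) := by
      intro n
      have hfin : (J ∩ Set.Iio n).Finite :=
        (Set.finite_Iio n).subset Set.inter_subset_right
      set famn := hfin.toFinset.image A with hfamdef
      have hEq : (⋃ w ∈ famn, S.cyl w) = ⋃ j ∈ J ∩ Set.Iio n, S.cyl (A j) := by
        ext z
        constructor
        · intro hz
          obtain ⟨w, hw, hzw⟩ := Set.mem_iUnion₂.mp hz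
          obtain ⟨j, hj, rfl⟩ := Finset.mem_image.mp hw
          exact Set.mem_iUnion₂.mpr ⟨j, hfin.mem_toFinset.mp hj, hzw⟩
        · intro hz
          obtain ⟨j, hj, hzj⟩ := Set.mem_iUnion₂.mp hz
          exact Set.mem_iUnion₂.mpr ⟨A j,
            Finset.mem_image_of_mem A (hfin.mem_toFinset.mpr hj), hzj⟩
      have hne : ∀ w ∈ famn, w ≠ [] ∧ (S.cyl w).Nonempty := by
        intro w hw
        obtain ⟨j, hj, rfl⟩ := Finset.mem_image.mp hw
        exact hA1 j (hfin.mem_toFinset.mp hj).1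
      have hdis : ∀ w ∈ famn, ∀ w' ∈ famn, w ≠ w' →
          Disjoint (S.cyl w) (S.cyl w') := by
        intro w hw w' hw' hww'
        obtain ⟨j, hj, rfl⟩ := Finset.mem_image.mp hw
        obtain ⟨j', hj', rfl⟩ := Finset.mem_image.mp hw'
        have hjj' : j ≠ j' := fun h => hww' (by rw [h])
        exact hdisj j (hfin.mem_toFinset.mp hj).1 j' (hfin.mem_toFinset.mp hj').1 hjj'
      have hk := S.key_ge ht F hgδ hfc famn hne hdis
      have hsub : (⋂ i, F i) ∩ (⋃ w ∈ famn, S.cyl w) ⊆ (⋂ i, F i) ∩ U := by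
        refine Set.inter_subset_inter_right _ ?_
        rw [hEq, hdecomp]
        intro z hz
        obtain ⟨j, hj, hzj⟩ := Set.mem_iUnion₂.mp hz
        exact Set.mem_iUnion₂.mpr ⟨j, hj.1, hzj⟩
      calc S.Minf t (⋃ j ∈ J ∩ Set.Iio n, S.cyl (A j))
          = S.Minf t (⋃ w ∈ famn, S.cyl w) := (S.Minf_congr hEq).symm
        _ ≤ S.Minf t ((⋂ i, F i) ∩ ⋃ w ∈ famn, S.cyl w) := hk
        _ ≤ S.Minf t ((⋂ i, F i) ∩ U) := S.Minf_mono hsub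
    refine ENNReal.le_of_forall_pos_le_add fun η hη _ => ?_
    have hlt : ∀ n : ℕ, S.Minf t (⋃ j ∈ J ∩ Set.Iio n, S.cyl (A j)) <
        S.Minf t ((⋂ i, F i) ∩ U) + (η : ℝ≥0∞) :=
      fun n => lt_of_le_of_lt (hpern n)
        (ENNReal.lt_add_right (S.Minf_lt_top ht _).ne
          (by exact_mod_cast hη.ne'))
    have hISL := S.ISL' ht A J hA1 hdisj hlt
    calc S.Minf t U = S.Minf t (⋃ j ∈ J, S.cyl (A j)) := S.Minf_congr hdecomp
      _ ≤ S.Minf t ((⋂ i, F i) ∩ U) + (η : ℝ≥0∞) := hISL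
  exact ⟨hopen, IsGδ.iInter (fun i => (hF i).1),
    fun w hw => hopen (S.cyl w) (S.isOpen_cyl w)⟩
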